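/- arXiv:2310.03323 — 3 statements merged into one kernel-verified Lean document; each statement's English description precedes it below -/
import Mathlib

section
/- For s ∈ (0,1) there exists a constant C_2 > 0, namely C_2 = ∫_{|η|_p ≤ p} |χ(η) - 1|^2 / |η|_p^{2s+1} dη, such that for every ξ ∈ Q_p with |ξ|_p ≥ p^{-N+1}, the quantity A_s(ξ) = ∫_{B_N} |χ(zξ) - 1|^2 / |z|_p^{2s+1} dz satisfies A_s(ξ) ≥ C_2 |ξ|_p^{2s}. -/
open MeasureTheory Filter Topology
open scoped ENNReal

open Classical in
/-- The p-adic fractional part of `x`: the unique rational `r ∈ [0,1)` with denominator a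
power of `p` such that `x - r` is a p-adic integer. -/
noncomputable def padicFract (p : ℕ) [Fact p.Prime] (x : ℚ_[p]) : ℚ :=
  if h : ∃ r : ℚ, ‖x - (r : ℚ_[p])‖ ≤ 1 ∧ 0 ≤ r ∧ r < 1 ∧ ∃ n : ℕ, (r * (p : ℚ) ^ n).den = 1
  then h.choose else 0

/-- The standard additive character `χ(x) = exp(2πi {x}_p)` of `ℚ_p`. -/
noncomputable def padicChar (p : ℕ) [Fact p.Prime] (x : ℚ_[p]) : ℂ :=
  Complex.exp (2 * Real.pi * Complex.I * ((padicFract p x : ℝ) : ℂ))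

noncomputable instance (p : ℕ) [Fact p.Prime] : MeasurableSpace ℚ_[p] := borel _
instance (p : ℕ) [Fact p.Prime] : BorelSpace ℚ_[p] := ⟨rfl⟩

variable {p : ℕ} [Fact p.Prime]

private lemma rat_eq_zero_of (q : ℚ) (hden : ∃ n : ℕ, (q * (p:ℚ) ^ n).den = 1)
    (hnorm : ‖(q : ℚ_[p])‖ ≤ 1) (habs : |q| < 1) : q = 0 := by
  obtain ⟨n, hn⟩ := hden
  have hp0 : (p:ℚ) ≠ 0 := Nat.cast_ne_zero.mpr (Fact.out : p.Prime).ne_zero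
  set z := (q * (p:ℚ)^n).num with hzdef
  have hz : (z : ℚ) = q * (p:ℚ)^n := by
    rw [hzdef]; exact_mod_cast Rat.den_eq_one_iff _ |>.mp hn
  have hq : q = (z : ℚ) / (p:ℚ)^n := by rw [hz]; field_simp
  have hnz : ‖(z : ℚ_[p])‖ ≤ (p:ℝ) ^ (-(n:ℤ)) := by
    have hcast : (z : ℚ_[p]) = (q : ℚ_[p]) * (p:ℚ_[p])^n := by
      have := congrArg (fun t : ℚ => (t : ℚ_[p])) hz
      push_cast at this ⊢
      simpa using this
    rw [hcast, norm_mul, Padic.norm_p_pow]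
    calc ‖(q:ℚ_[p])‖ * (p:ℝ)^(-(n:ℤ)) ≤ 1 * (p:ℝ)^(-(n:ℤ)) := by
          apply mul_le_mul_of_nonneg_right hnorm (zpow_nonneg (by positivity) _)
      _ = (p:ℝ)^(-(n:ℤ)) := one_mul _
  obtain ⟨d, hd⟩ := (Padic.norm_int_le_pow_iff_dvd z n).mp hnz
  have hqd : q = (d : ℚ) := by
    rw [hq, hd]; push_cast; field_simp
  rw [hqd] at habs ⊢
  have : d = 0 := by
    by_contra h
    have h1 : (1:ℚ) ≤ |(d:ℚ)| := by exact_mod_cast Int.one_le_abs (by omega)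
    linarith
  simp [this]

private lemma padicFract_unique (x : ℚ_[p]) (r r' : ℚ)
    (h1 : ‖x - (r:ℚ_[p])‖ ≤ 1) (h2 : 0 ≤ r) (h3 : r < 1)
    (h4 : ∃ n : ℕ, (r * (p:ℚ) ^ n).den = 1)
    (h1' : ‖x - (r':ℚ_[p])‖ ≤ 1) (h2' : 0 ≤ r') (h3' : r' < 1)
    (h4' : ∃ n : ℕ, (r' * (p:ℚ) ^ n).den = 1) : r = r' := by
  have hnorm : ‖((r - r' : ℚ) : ℚ_[p])‖ ≤ 1 := by
    have hcast : ((r - r' : ℚ) : ℚ_[p]) = (x - r') + -(x - r) := by push_cast; ring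
    rw [hcast]
    refine le_trans (Padic.nonarchimedean _ _) ?_
    rw [norm_neg]
    exact max_le h1' h1
  have hden : ∃ n : ℕ, ((r - r') * (p:ℚ) ^ n).den = 1 := by
    obtain ⟨n, hn⟩ := h4
    obtain ⟨n', hn'⟩ := h4'
    refine ⟨n + n', ?_⟩
    have ha : ((r * (p:ℚ)^n).num : ℚ) = r * (p:ℚ)^n := by
      exact_mod_cast Rat.den_eq_one_iff _ |>.mp hn
    have hb : ((r' * (p:ℚ)^n').num : ℚ) = r' * (p:ℚ)^n' := by
      exact_mod_cast Rat.den_eq_one_iff _ |>.mp hn'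
    have : (r - r') * (p:ℚ)^(n+n') =
        (((r * (p:ℚ)^n).num * (p:ℚ)^n' - (r' * (p:ℚ)^n').num * (p:ℚ)^n : ℚ)) := by
      rw [ha, hb]; ring
    rw [this]
    have : ((r * (p:ℚ)^n).num * (p:ℚ)^n' - (r' * (p:ℚ)^n').num * (p:ℚ)^n : ℚ)
        = (((r * (p:ℚ)^n).num * (p:ℤ)^n' - (r' * (p:ℚ)^n').num * (p:ℤ)^n : ℤ) : ℚ) := by
      push_cast; ring
    rw [this, Rat.den_intCast]
  have habs : |r - r'| < 1 := abs_lt.mpr ⟨by linarith, by linarith⟩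
  have := rat_eq_zero_of (r - r') hden hnorm habs
  linarith [sub_eq_zero.mp this]

lemma padicFract_eq (x : ℚ_[p]) (r : ℚ)
    (h1 : ‖x - (r:ℚ_[p])‖ ≤ 1) (h2 : 0 ≤ r) (h3 : r < 1)
    (h4 : ∃ n : ℕ, (r * (p:ℚ) ^ n).den = 1) : padicFract p x = r := by
  have hex : ∃ r : ℚ, ‖x - (r : ℚ_[p])‖ ≤ 1 ∧ 0 ≤ r ∧ r < 1 ∧
      ∃ n : ℕ, (r * (p : ℚ) ^ n).den = 1 := ⟨r, h1, h2, h3, h4⟩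
  rw [padicFract, dif_pos hex]
  obtain ⟨g1, g2, g3, g4⟩ := hex.choose_spec
  exact padicFract_unique x _ r g1 g2 g3 g4 h1 h2 h3 h4

lemma padicFract_congr {x y : ℚ_[p]} (h : ‖x - y‖ ≤ 1) :
    padicFract p x = padicFract p y := by
  have key : ∀ r : ℚ, ‖y - (r:ℚ_[p])‖ ≤ 1 → ‖x - (r:ℚ_[p])‖ ≤ 1 := fun r hr => by
    have hc : x - (r:ℚ_[p]) = (x - y) + (y - r) := by ring
    rw [hc]
    exact le_trans (Padic.nonarchimedean _ _) (max_le h hr)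
  by_cases hy : ∃ r : ℚ, ‖y - (r : ℚ_[p])‖ ≤ 1 ∧ 0 ≤ r ∧ r < 1 ∧
      ∃ n : ℕ, (r * (p : ℚ) ^ n).den = 1
  · obtain ⟨r, g1, g2, g3, g4⟩ := hy
    rw [padicFract_eq y r g1 g2 g3 g4, padicFract_eq x r (key r g1) g2 g3 g4]
  · have hx : ¬ ∃ r : ℚ, ‖x - (r : ℚ_[p])‖ ≤ 1 ∧ 0 ≤ r ∧ r < 1 ∧
        ∃ n : ℕ, (r * (p : ℚ) ^ n).den = 1 := by
      rintro ⟨r, g1, g2, g3, g4⟩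
      refine hy ⟨r, ?_, g2, g3, g4⟩
      have hc : y - (r:ℚ_[p]) = -(x - y) + (x - r) := by ring
      rw [hc]
      refine le_trans (Padic.nonarchimedean _ _) (max_le ?_ g1)
      rw [norm_neg]; exact h
    rw [padicFract, padicFract, dif_neg hx, dif_neg hy]

lemma padicChar_congr {x y : ℚ_[p]} (h : ‖x - y‖ ≤ 1) :
    padicChar p x = padicChar p y := by
  rw [padicChar, padicChar, padicFract_congr h]

lemma continuous_padicChar : Continuous (padicChar p) := by
  rw [continuous_iff_continuousAt]
  intro x
  apply ContinuousAt.congr (continuousAt_const (y := padicChar p x))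
  filter_upwards [Metric.ball_mem_nhds x one_pos] with y hy
  exact (padicChar_congr (x := y) (y := x) (le_of_lt (by simpa [dist_eq_norm] using hy))).symm


lemma exists_coset (x : ℚ_[p]) (hx : ‖x‖ ≤ (p:ℝ)) :
    ∃ k : ℕ, k < p ∧ ‖x - (k : ℚ_[p]) * (p:ℚ_[p])⁻¹‖ ≤ 1 := by
  have hp1 : (1:ℝ) < p := by exact_mod_cast (Fact.out : p.Prime).one_lt
  have hpR : (0:ℝ) < p := by linarith
  have hppos : ((p:ℚ_[p]) : ℚ_[p]) ≠ 0 := by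
    exact_mod_cast Nat.cast_ne_zero.mpr (Fact.out : p.Prime).ne_zero
  have hu : ‖x * (p:ℚ_[p])‖ ≤ 1 := by
    rw [norm_mul, Padic.norm_p]
    calc ‖x‖ * (p:ℝ)⁻¹ ≤ (p:ℝ) * (p:ℝ)⁻¹ :=
          mul_le_mul_of_nonneg_right hx (by positivity)
      _ = 1 := mul_inv_cancel₀ (ne_of_gt hpR)
  set v : ℤ_[p] := ⟨x * (p:ℚ_[p]), hu⟩ with hv
  refine ⟨v.appr 1, by simpa using v.appr_lt 1, ?_⟩
  have hspec : ‖v - (v.appr 1 : ℤ_[p])‖ ≤ (p:ℝ)^(-1:ℤ) := by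
    rw [show ((-1:ℤ)) = (-(1:ℕ):ℤ) by norm_num]
    exact (PadicInt.norm_le_pow_iff_mem_span_pow _ 1).mpr (by simpa using v.appr_spec 1)
  have hnorm : ‖x * (p:ℚ_[p]) - ((v.appr 1 : ℕ) : ℚ_[p])‖ ≤ (p:ℝ)⁻¹ := by
    have : ((v - (v.appr 1 : ℤ_[p]) : ℤ_[p]) : ℚ_[p]) = x * (p:ℚ_[p]) - ((v.appr 1 : ℕ) : ℚ_[p]) := by
      push_cast [hv]
      rfl
    calc ‖x * (p:ℚ_[p]) - ((v.appr 1 : ℕ) : ℚ_[p])‖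
        = ‖(v - (v.appr 1 : ℤ_[p]) : ℤ_[p])‖ := by rw [← this]; rfl
      _ ≤ (p:ℝ)^(-1:ℤ) := hspec
      _ = (p:ℝ)⁻¹ := by simp
  have key : x - ((v.appr 1 : ℕ) : ℚ_[p]) * (p:ℚ_[p])⁻¹
      = (x * (p:ℚ_[p]) - ((v.appr 1 : ℕ) : ℚ_[p])) * (p:ℚ_[p])⁻¹ := by
    field_simp
  rw [key, norm_mul, norm_inv, Padic.norm_p, inv_inv]
  calc ‖x * (p:ℚ_[p]) - ((v.appr 1 : ℕ) : ℚ_[p])‖ * (p:ℝ)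
      ≤ (p:ℝ)⁻¹ * (p:ℝ) := mul_le_mul_of_nonneg_right hnorm (le_of_lt hpR)
    _ = 1 := inv_mul_cancel₀ (ne_of_gt hpR)

lemma nat_coset_inj {k k' : ℕ} (hk : k < p) (hk' : k' < p)
    (h : ‖(k : ℚ_[p]) - (k' : ℚ_[p])‖ ≤ (p:ℝ)⁻¹) : k = k' := by
  have h2 : ‖(((k:ℤ) - (k':ℤ) : ℤ) : ℚ_[p])‖ ≤ (p:ℝ)^(-(1:ℕ):ℤ) := by
    push_cast
    simpa using h
  have hdvd : ((p:ℤ)^1 : ℤ) ∣ ((k:ℤ) - (k':ℤ)) :=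
    (Padic.norm_int_le_pow_iff_dvd _ 1).mp h2
  rw [pow_one] at hdvd
  obtain ⟨c, hc⟩ := hdvd
  have hp0 : 0 < (p:ℤ) := by exact_mod_cast (Fact.out : p.Prime).pos
  have hc0 : c = 0 := by
    by_contra h0
    have h1 : 1 ≤ |c| := Int.one_le_abs h0
    have h2 : (p:ℤ) ≤ |(p:ℤ) * c| := by
      rw [abs_mul, abs_of_pos hp0]; nlinarith
    rw [← hc] at h2
    have h3 : |(k:ℤ) - k'| < p := abs_lt.mpr ⟨by omega, by omega⟩
    omega
  rw [hc0, mul_zero] at hc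
  omega


lemma measurableSet_cball (a : ℚ_[p]) (c : ℝ) :
    MeasurableSet {x : ℚ_[p] | ‖x - a‖ ≤ c} :=
  (isClosed_le ((continuous_id.sub continuous_const).norm) continuous_const).measurableSet

lemma ball_union (c : ℚ_[p]) (hc : c ≠ 0) :
    {x : ℚ_[p] | ‖x‖ ≤ (p:ℝ) * ‖c‖} =
      ⋃ k ∈ Finset.range p, {x : ℚ_[p] | ‖x - (k:ℚ_[p]) * c * (p:ℚ_[p])⁻¹‖ ≤ ‖c‖} := by
  have hp1 : (1:ℝ) ≤ p := by exact_mod_cast (Fact.out : p.Prime).one_lt.le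
  have hppos : (p:ℚ_[p]) ≠ 0 := by
    exact_mod_cast Nat.cast_ne_zero.mpr (Fact.out : p.Prime).ne_zero
  ext x
  simp only [Set.mem_setOf_eq, Set.mem_iUnion, Finset.mem_range, exists_prop]
  constructor
  · intro hx
    have hxc : ‖x * c⁻¹‖ ≤ (p:ℝ) := by
      rw [norm_mul, norm_inv]
      have hcpos : 0 < ‖c‖ := norm_pos_iff.mpr hc
      calc ‖x‖ * ‖c‖⁻¹ ≤ ((p:ℝ) * ‖c‖) * ‖c‖⁻¹ :=
            mul_le_mul_of_nonneg_right hx (by positivity)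
        _ = (p:ℝ) := by field_simp
    obtain ⟨k, hk, hnorm⟩ := exists_coset (x * c⁻¹) hxc
    refine ⟨k, hk, ?_⟩
    have key : x - (k:ℚ_[p]) * c * (p:ℚ_[p])⁻¹ = (x * c⁻¹ - (k:ℚ_[p]) * (p:ℚ_[p])⁻¹) * c := by
      field_simp
    rw [key, norm_mul]
    calc ‖x * c⁻¹ - (k:ℚ_[p]) * (p:ℚ_[p])⁻¹‖ * ‖c‖ ≤ 1 * ‖c‖ :=
          mul_le_mul_of_nonneg_right hnorm (norm_nonneg _)
      _ = ‖c‖ := one_mul _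
  · rintro ⟨k, hk, hx⟩
    have hcenter : ‖(k:ℚ_[p]) * c * (p:ℚ_[p])⁻¹‖ ≤ (p:ℝ) * ‖c‖ := by
      rw [norm_mul, norm_mul, norm_inv, Padic.norm_p, inv_inv]
      have h1 : ‖(k:ℚ_[p])‖ ≤ 1 := by
        have := Padic.norm_int_le_one (p := p) (k:ℤ)
        push_cast at this
        exact this
      calc ‖(k:ℚ_[p])‖ * ‖c‖ * (p:ℝ) ≤ 1 * ‖c‖ * (p:ℝ) := by
            apply mul_le_mul_of_nonneg_right _ (by positivity)
            exact mul_le_mul_of_nonneg_right h1 (norm_nonneg _)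
        _ = (p:ℝ) * ‖c‖ := by ring
    have hxeq : x = (x - (k:ℚ_[p]) * c * (p:ℚ_[p])⁻¹) + (k:ℚ_[p]) * c * (p:ℚ_[p])⁻¹ := by ring
    rw [hxeq]
    refine le_trans (Padic.nonarchimedean _ _) (max_le ?_ hcenter)
    calc ‖x - (k:ℚ_[p]) * c * (p:ℚ_[p])⁻¹‖ ≤ ‖c‖ := hx
      _ = 1 * ‖c‖ := (one_mul _).symm
      _ ≤ (p:ℝ) * ‖c‖ := mul_le_mul_of_nonneg_right hp1 (norm_nonneg _)

lemma ball_disjoint (c : ℚ_[p]) (hc : c ≠ 0) :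
    Set.PairwiseDisjoint (↑(Finset.range p) : Set ℕ)
      (fun k => {x : ℚ_[p] | ‖x - (k:ℚ_[p]) * c * (p:ℚ_[p])⁻¹‖ ≤ ‖c‖}) := by
  intro k hk k' hk' hne
  simp only [Finset.coe_range, Set.mem_Iio] at hk hk'
  refine Set.disjoint_left.mpr fun x hx hx' => hne ?_
  simp only [Set.mem_setOf_eq] at hx hx'
  have hdiff : ‖((k:ℚ_[p]) - (k':ℚ_[p])) * c * (p:ℚ_[p])⁻¹‖ ≤ ‖c‖ := by
    have key : ((k:ℚ_[p]) - (k':ℚ_[p])) * c * (p:ℚ_[p])⁻¹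
        = -(x - (k:ℚ_[p]) * c * (p:ℚ_[p])⁻¹) + (x - (k':ℚ_[p]) * c * (p:ℚ_[p])⁻¹) := by ring
    rw [key]
    refine le_trans (Padic.nonarchimedean _ _) (max_le ?_ hx')
    rw [norm_neg]; exact hx
  rw [norm_mul, norm_mul, norm_inv, Padic.norm_p, inv_inv] at hdiff
  have hcpos : 0 < ‖c‖ := norm_pos_iff.mpr hc
  have hppos : (0:ℝ) < p := by exact_mod_cast (Fact.out : p.Prime).pos
  have : ‖(k:ℚ_[p]) - (k':ℚ_[p])‖ ≤ (p:ℝ)⁻¹ := by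
    rw [inv_eq_one_div, le_div_iff₀ hppos]
    nlinarith [hdiff, hcpos]
  exact nat_coset_inj hk hk' this

lemma measure_cball (μ : Measure ℚ_[p]) [μ.IsAddHaarMeasure] (a : ℚ_[p]) (c : ℝ) :
    μ {x : ℚ_[p] | ‖x - a‖ ≤ c} = μ {x : ℚ_[p] | ‖x‖ ≤ c} := by
  have hset : {x : ℚ_[p] | ‖x - a‖ ≤ c} = (fun x => (-a) + x) ⁻¹' {x : ℚ_[p] | ‖x‖ ≤ c} := by
    ext x; simp [neg_add_eq_sub]
  rw [hset, measure_preimage_add]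

lemma measure_ball_step (μ : Measure ℚ_[p]) [μ.IsAddHaarMeasure] (n : ℤ) :
    μ {x : ℚ_[p] | ‖x‖ ≤ (p:ℝ)^(n+1)} = p * μ {x : ℚ_[p] | ‖x‖ ≤ (p:ℝ)^n} := by
  have hp0 : (p:ℝ) ≠ 0 := by
    exact_mod_cast (Fact.out : p.Prime).ne_zero
  set c : ℚ_[p] := (p:ℚ_[p])^(-n) with hcdef
  have hc : c ≠ 0 := zpow_ne_zero _ (by exact_mod_cast (Fact.out : p.Prime).ne_zero)
  have hnc : ‖c‖ = (p:ℝ)^n := by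
    rw [hcdef, Padic.norm_p_zpow, neg_neg]
  have h1 : (p:ℝ)^(n+1) = (p:ℝ) * ‖c‖ := by
    rw [hnc, zpow_add_one₀ hp0]; ring
  rw [h1, ball_union c hc,
    measure_biUnion_finset (ball_disjoint c hc) (fun k _ => measurableSet_cball _ _)]
  simp_rw [measure_cball μ _ ‖c‖, hnc]
  rw [Finset.sum_const, Finset.card_range, nsmul_eq_mul]

lemma measure_ball_val (μ : Measure ℚ_[p]) [μ.IsAddHaarMeasure]
    (hμ : μ {x : ℚ_[p] | ‖x‖ ≤ 1} = 1) (n : ℤ) :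
    μ {x : ℚ_[p] | ‖x‖ ≤ (p:ℝ)^n} = ENNReal.ofReal ((p:ℝ)^n) := by
  have hp0 : (p:ℝ) ≠ 0 := by exact_mod_cast (Fact.out : p.Prime).ne_zero
  have hpE0 : (p:ℝ≥0∞) ≠ 0 := by exact_mod_cast (Fact.out : p.Prime).ne_zero
  have hpET : (p:ℝ≥0∞) ≠ ⊤ := ENNReal.natCast_ne_top p
  have hof : ∀ m : ℤ, (p:ℝ≥0∞) * ENNReal.ofReal ((p:ℝ)^m) = ENNReal.ofReal ((p:ℝ)^(m+1)) := by
    intro m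
    rw [← ENNReal.ofReal_natCast p, ← ENNReal.ofReal_mul (by positivity), zpow_add_one₀ hp0]
    ring_nf
  induction n using Int.induction_on with
  | zero => simpa using hμ
  | succ m ih =>
    rw [measure_ball_step μ m, ih, hof]
  | pred m ih =>
    have h := measure_ball_step μ (-(m:ℤ)-1)
    rw [show (-(m:ℤ)-1+1) = -(m:ℤ) by ring, ih] at h
    have h2 : ENNReal.ofReal ((p:ℝ)^(-(m:ℤ))) = (p:ℝ≥0∞) * ENNReal.ofReal ((p:ℝ)^(-(m:ℤ)-1)) := by
      rw [hof, show (-(m:ℤ)-1+1) = -(m:ℤ) by ring]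
    rw [h2] at h
    exact (ENNReal.mul_right_inj hpE0 hpET).mp h.symm

lemma padicFract_coset (k : ℕ) (hk : k < p) (x : ℚ_[p])
    (hx : ‖x - (k:ℚ_[p]) * (p:ℚ_[p])⁻¹‖ ≤ 1) : padicFract p x = (k:ℚ) / p := by
  have hp0 : (0:ℚ) < p := by exact_mod_cast (Fact.out : p.Prime).pos
  refine padicFract_eq x ((k:ℚ)/p) ?_ (by positivity) ?_ ⟨1, ?_⟩
  · have : (((k:ℚ)/p : ℚ) : ℚ_[p]) = (k:ℚ_[p]) * (p:ℚ_[p])⁻¹ := by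
      push_cast [div_eq_mul_inv]
      ring
    rw [this]; exact hx
  · rw [div_lt_one hp0]; exact_mod_cast hk
  · have : (k:ℚ)/p * (p:ℚ)^1 = (k:ℚ) := by field_simp
    rw [this, Rat.den_natCast]

lemma padicChar_coset (k : ℕ) (hk : k < p) (x : ℚ_[p])
    (hx : ‖x - (k:ℚ_[p]) * (p:ℚ_[p])⁻¹‖ ≤ 1) :
    padicChar p x = Complex.exp (2 * Real.pi * Complex.I * ((k:ℝ)/p)) := by
  rw [padicChar, padicFract_coset k hk x hx]
  push_cast
  norm_num

lemma padicChar_of_norm_le_one {x : ℚ_[p]} (hx : ‖x‖ ≤ 1) : padicChar p x = 1 := by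
  have h0 : padicFract p x = 0 := by
    refine padicFract_eq x 0 (by simpa using hx) le_rfl one_pos ⟨0, by norm_num⟩
  rw [padicChar, h0]
  simp

lemma norm_padicChar (x : ℚ_[p]) : ‖padicChar p x‖ = 1 := by
  rw [padicChar, show 2 * Real.pi * Complex.I * ((padicFract p x : ℝ) : ℂ)
    = ((2 * Real.pi * (padicFract p x : ℝ) : ℝ) : ℂ) * Complex.I by push_cast; ring]
  exact Complex.norm_exp_ofReal_mul_I _

lemma padicChar_one_div_p_ne_one : padicChar p ((1:ℚ_[p]) * (p:ℚ_[p])⁻¹) ≠ 1 := by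
  have hp1 : 1 < p := (Fact.out : p.Prime).one_lt
  rw [padicChar_coset (p := p) 1 hp1 ((1:ℚ_[p]) * (p:ℚ_[p])⁻¹) (by simp),
    ne_eq, Complex.exp_eq_one_iff]
  rintro ⟨n, hn⟩
  have hIne : (2 * Real.pi * Complex.I) ≠ 0 := by
    simp [Real.pi_ne_zero, Complex.I_ne_zero]
  rw [show (n:ℂ) * (2 * Real.pi * Complex.I) = (2 * Real.pi * Complex.I) * n by ring] at hn
  have h2 : ((((1:ℕ):ℝ))/p : ℂ) = (n:ℂ) := mul_left_cancel₀ hIne hn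
  have h3 : (1:ℝ)/p = (n:ℝ) := by exact_mod_cast h2
  have hp0 : (0:ℝ) < p := by exact_mod_cast (Fact.out : p.Prime).pos
  have hlt : (0:ℝ) < 1/p := by positivity
  have hlt1 : (1:ℝ)/p < 1 := by
    rw [div_lt_one hp0]; exact_mod_cast hp1
  rw [h3] at hlt hlt1
  have : (0:ℤ) < n := by exact_mod_cast hlt
  have : (n:ℝ) ≥ 1 := by exact_mod_cast this
  linarith

lemma setIntegral_coset_union (μ : Measure ℚ_[p]) [μ.IsAddHaarMeasure]
    (hμ : μ {x : ℚ_[p] | ‖x‖ ≤ 1} = 1) (s : ℝ) (ξ : ℚ_[p]) (hξ : ξ ≠ 0) :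
    ∫ z in {z : ℚ_[p] | ‖z‖ ≤ (p:ℝ) * ‖ξ⁻¹‖},
        ‖padicChar p (z * ξ) - 1‖ ^ 2 / ‖z‖ ^ (2 * s + 1) ∂μ
      = (∑ k ∈ Finset.range p, ‖padicChar p ((k:ℚ_[p]) * (p:ℚ_[p])⁻¹) - 1‖ ^ 2)
          / ((p:ℝ) * ‖ξ⁻¹‖) ^ (2 * s + 1) * ‖ξ⁻¹‖ := by
  have hp1 : (1:ℝ) < p := by exact_mod_cast (Fact.out : p.Prime).one_lt
  set c : ℚ_[p] := ξ⁻¹ with hcdef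
  have hc : c ≠ 0 := inv_ne_zero hξ
  have hcpos : 0 < ‖c‖ := norm_pos_iff.mpr hc
  have hcξ : c * ξ = 1 := inv_mul_cancel₀ hξ
  -- the measure of each coset
  have hval : ‖c‖ = (p:ℝ) ^ (-c.valuation) := Padic.norm_eq_zpow_neg_valuation hc
  have hmeas : ∀ k : ℕ, μ {x : ℚ_[p] | ‖x - (k:ℚ_[p]) * c * (p:ℚ_[p])⁻¹‖ ≤ ‖c‖}
      = ENNReal.ofReal ‖c‖ := by
    intro k
    rw [measure_cball μ _ _, hval, measure_ball_val μ hμ]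
  -- value of the integrand on each coset
  have hconst : ∀ k ∈ Finset.range p, ∀ z ∈
      {x : ℚ_[p] | ‖x - (k:ℚ_[p]) * c * (p:ℚ_[p])⁻¹‖ ≤ ‖c‖},
      ‖padicChar p (z * ξ) - 1‖ ^ 2 / ‖z‖ ^ (2 * s + 1)
        = ‖padicChar p ((k:ℚ_[p]) * (p:ℚ_[p])⁻¹) - 1‖ ^ 2 / ((p:ℝ) * ‖c‖) ^ (2 * s + 1) := by
    intro k hk z hz
    rw [Finset.mem_range] at hk
    rw [Set.mem_setOf_eq] at hz
    have hchar : padicChar p (z * ξ) = padicChar p ((k:ℚ_[p]) * (p:ℚ_[p])⁻¹) := by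
      apply padicChar_congr
      have hkey : z * ξ - (k:ℚ_[p]) * (p:ℚ_[p])⁻¹ = (z - (k:ℚ_[p]) * c * (p:ℚ_[p])⁻¹) * ξ := by
        have : (k:ℚ_[p]) * c * (p:ℚ_[p])⁻¹ * ξ = (k:ℚ_[p]) * (p:ℚ_[p])⁻¹ * (c * ξ) := by ring
        rw [sub_mul, this, hcξ, mul_one]
      rw [hkey, norm_mul]
      calc ‖z - (k:ℚ_[p]) * c * (p:ℚ_[p])⁻¹‖ * ‖ξ‖ ≤ ‖c‖ * ‖ξ‖ :=
            mul_le_mul_of_nonneg_right hz (norm_nonneg _)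
        _ = ‖c * ξ‖ := (norm_mul _ _).symm
        _ = 1 := by rw [hcξ, norm_one]
    rcases Nat.eq_zero_or_pos k with hk0 | hk0
    · subst hk0
      have h1 : padicChar p (((0:ℕ):ℚ_[p]) * (p:ℚ_[p])⁻¹) = 1 :=
        padicChar_of_norm_le_one (by simp)
      rw [hchar, h1]
      simp
    · have hknorm : ‖(k:ℚ_[p])‖ = 1 := by
        have hle : ‖((k:ℤ):ℚ_[p])‖ ≤ 1 := Padic.norm_int_le_one _
        have hnlt : ¬ ‖((k:ℤ):ℚ_[p])‖ < 1 := by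
          rw [Padic.norm_intCast_lt_one_iff]
          intro hdvd
          have : (p:ℤ) ≤ (k:ℤ) := Int.le_of_dvd (by exact_mod_cast hk0) hdvd
          omega
        have : ‖((k:ℤ):ℚ_[p])‖ = 1 := le_antisymm hle (not_lt.mp hnlt)
        push_cast at this
        exact this
      have hcenter : ‖(k:ℚ_[p]) * c * (p:ℚ_[p])⁻¹‖ = (p:ℝ) * ‖c‖ := by
        rw [norm_mul, norm_mul, hknorm, norm_inv (a := ((p:ℕ):ℚ_[p])),
          Padic.norm_p, inv_inv]
        ring
      have hznorm : ‖z‖ = (p:ℝ) * ‖c‖ := by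
        have hne : ‖(k:ℚ_[p]) * c * (p:ℚ_[p])⁻¹‖ ≠ ‖z - (k:ℚ_[p]) * c * (p:ℚ_[p])⁻¹‖ := by
          rw [hcenter]
          intro habs
          have : (p:ℝ) * ‖c‖ ≤ ‖c‖ := habs ▸ hz
          nlinarith
        have hzz : z = (k:ℚ_[p]) * c * (p:ℚ_[p])⁻¹ + (z - (k:ℚ_[p]) * c * (p:ℚ_[p])⁻¹) := by
          ring
        rw [hzz, Padic.add_eq_max_of_ne hne, hcenter]
        rw [max_eq_left]
        calc ‖z - (k:ℚ_[p]) * c * (p:ℚ_[p])⁻¹‖ ≤ ‖c‖ := hz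
          _ ≤ (p:ℝ) * ‖c‖ := by nlinarith
      rw [hchar, hznorm]
  -- rewrite the set and split the integral
  rw [ball_union c hc]
  rw [MeasureTheory.integral_biUnion_finset (Finset.range p)
    (fun k _ => measurableSet_cball _ _) (ball_disjoint c hc)
    (fun k hk => by
      rw [MeasureTheory.integrableOn_congr_fun (hconst k hk) (measurableSet_cball _ _)]
      exact MeasureTheory.integrableOn_const
        (by rw [hmeas k]; exact ENNReal.ofReal_ne_top))]
  have hterm : ∀ k ∈ Finset.range p,
      ∫ z in {x : ℚ_[p] | ‖x - (k:ℚ_[p]) * c * (p:ℚ_[p])⁻¹‖ ≤ ‖c‖},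
        ‖padicChar p (z * ξ) - 1‖ ^ 2 / ‖z‖ ^ (2 * s + 1) ∂μ
      = ‖padicChar p ((k:ℚ_[p]) * (p:ℚ_[p])⁻¹) - 1‖ ^ 2 / ((p:ℝ) * ‖c‖) ^ (2 * s + 1) * ‖c‖ := by
    intro k hk
    rw [MeasureTheory.setIntegral_congr_fun (measurableSet_cball _ _) (fun z hz => hconst k hk z hz),
      MeasureTheory.setIntegral_const, measureReal_def, hmeas k, ENNReal.toReal_ofReal (norm_nonneg _),
      smul_eq_mul, mul_comm]
  rw [Finset.sum_congr rfl hterm, ← Finset.sum_mul, ← Finset.sum_div]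

/-- Lower bound for `A_s(ξ)`: with
`C₂ = ∫_{|η|_p ≤ p} |χ(η)-1|²/|η|_p^{2s+1} dη` one has `C₂ > 0` and
`A_s(ξ) = ∫_{B_N} |χ(zξ)-1|²/|z|_p^{2s+1} dz ≥ C₂ |ξ|_p^{2s}`
for all `ξ` with `|ξ|_p ≥ p^{-N+1}`. -/
theorem padic_As_lower_bound (p : ℕ) [Fact p.Prime] (N : ℤ) (s : ℝ)
    (hs : s ∈ Set.Ioo (0 : ℝ) 1)
    (μ : Measure ℚ_[p]) [μ.IsAddHaarMeasure] (hμ : μ {x : ℚ_[p] | ‖x‖ ≤ 1} = 1) :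
    0 < (∫ η in {η : ℚ_[p] | ‖η‖ ≤ (p : ℝ)},
          ‖padicChar p η - 1‖ ^ 2 / ‖η‖ ^ (2 * s + 1) ∂μ) ∧
    ∀ ξ : ℚ_[p], (p : ℝ) ^ (-N + 1) ≤ ‖ξ‖ →
      (∫ η in {η : ℚ_[p] | ‖η‖ ≤ (p : ℝ)},
          ‖padicChar p η - 1‖ ^ 2 / ‖η‖ ^ (2 * s + 1) ∂μ) * ‖ξ‖ ^ (2 * s) ≤
        ∫ z in {z : ℚ_[p] | ‖z‖ ≤ (p : ℝ) ^ N},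
          ‖padicChar p (z * ξ) - 1‖ ^ 2 / ‖z‖ ^ (2 * s + 1) ∂μ := by
  obtain ⟨hs0, hs1⟩ := hs
  have hpp : p.Prime := Fact.out
  have hp1 : (1:ℝ) < p := by exact_mod_cast hpp.one_lt
  have hppos : (0:ℝ) < p := by linarith
  have hp2 : 2 ≤ p := hpp.two_le
  have hC : (∫ η in {η : ℚ_[p] | ‖η‖ ≤ (p : ℝ)},
      ‖padicChar p η - 1‖ ^ 2 / ‖η‖ ^ (2 * s + 1) ∂μ)
      = (∑ k ∈ Finset.range p, ‖padicChar p ((k:ℚ_[p]) * (p:ℚ_[p])⁻¹) - 1‖ ^ 2)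
          / (p:ℝ) ^ (2 * s + 1) := by
    have h := setIntegral_coset_union μ hμ s (1:ℚ_[p]) one_ne_zero
    simp only [mul_one, inv_one, norm_one] at h
    exact h
  have hSpos : 0 < ∑ k ∈ Finset.range p, ‖padicChar p ((k:ℚ_[p]) * (p:ℚ_[p])⁻¹) - 1‖ ^ 2 := by
    have h1mem : (1:ℕ) ∈ Finset.range p := Finset.mem_range.mpr (by omega)
    have hne : padicChar p (((1:ℕ):ℚ_[p]) * (p:ℚ_[p])⁻¹) - 1 ≠ 0 := by
      rw [sub_ne_zero]
      simpa using padicChar_one_div_p_ne_one (p := p)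
    have hG1 : 0 < ‖padicChar p (((1:ℕ):ℚ_[p]) * (p:ℚ_[p])⁻¹) - 1‖ ^ 2 := by
      have := norm_pos_iff.mpr hne
      positivity
    exact lt_of_lt_of_le hG1 (Finset.single_le_sum
      (f := fun k : ℕ => ‖padicChar p ((k:ℚ_[p]) * (p:ℚ_[p])⁻¹) - 1‖ ^ 2)
      (fun k _ => by positivity) h1mem)
  have hPpow_pos : (0:ℝ) < (p:ℝ) ^ (2*s+1) := Real.rpow_pos_of_pos hppos _
  refine ⟨by rw [hC]; positivity, ?_⟩
  intro ξ hξnorm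
  have hξpos : 0 < ‖ξ‖ := lt_of_lt_of_le (zpow_pos hppos _) hξnorm
  have hξ0 : ξ ≠ 0 := norm_pos_iff.mp hξpos
  have hinv : ‖ξ⁻¹‖ = ‖ξ‖⁻¹ := norm_inv ξ
  have hinvpos : 0 < ‖ξ⁻¹‖ := by rw [hinv]; positivity
  have hsub : {z : ℚ_[p] | ‖z‖ ≤ (p:ℝ) * ‖ξ⁻¹‖} ⊆ {z : ℚ_[p] | ‖z‖ ≤ (p:ℝ) ^ N} := by
    intro z hz
    simp only [Set.mem_setOf_eq] at hz ⊢
    refine le_trans hz ?_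
    have h1 : ‖ξ⁻¹‖ ≤ (p:ℝ) ^ (N-1) := by
      have hexp : -(-N+1) = N - 1 := by ring
      have he : ((p:ℝ) ^ (-N+1))⁻¹ = (p:ℝ) ^ (N-1) := by
        rw [← zpow_neg, hexp]
      rw [hinv, ← he]
      gcongr
    calc (p:ℝ) * ‖ξ⁻¹‖ ≤ (p:ℝ) * (p:ℝ) ^ (N-1) :=
          mul_le_mul_of_nonneg_left h1 (le_of_lt hppos)
      _ = (p:ℝ) ^ N := by
          rw [← zpow_one_add₀ (ne_of_gt hppos)]
          congr 1
          ring
  have hnonneg : ∀ z : ℚ_[p], 0 ≤ ‖padicChar p (z * ξ) - 1‖ ^ 2 / ‖z‖ ^ (2*s+1) :=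
    fun z => by positivity
  have hbdd : ∀ z : ℚ_[p], ‖padicChar p (z * ξ) - 1‖ ^ 2 / ‖z‖ ^ (2*s+1)
      ≤ 4 / ‖ξ⁻¹‖ ^ (2*s+1) := by
    intro z
    by_cases hz : ‖z * ξ‖ ≤ 1
    · rw [padicChar_of_norm_le_one hz]
      simp only [sub_self, norm_zero]
      rw [zero_pow (by norm_num), zero_div]
      positivity
    · push_neg at hz
      rw [norm_mul] at hz
      have hz2 : ‖ξ⁻¹‖ ≤ ‖z‖ := by
        rw [hinv, inv_eq_one_div]
        refine le_of_lt ((div_lt_iff₀ hξpos).mpr ?_)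
        linarith
      have hden : ‖ξ⁻¹‖ ^ (2*s+1) ≤ ‖z‖ ^ (2*s+1) :=
        Real.rpow_le_rpow (norm_nonneg _) hz2 (by positivity)
      have hnum : ‖padicChar p (z*ξ) - 1‖^2 ≤ 4 := by
        have h2 : ‖padicChar p (z*ξ) - 1‖ ≤ 2 := by
          calc ‖padicChar p (z*ξ) - 1‖ ≤ ‖padicChar p (z*ξ)‖ + ‖(1:ℂ)‖ := norm_sub_le _ _
            _ = 2 := by rw [norm_padicChar, norm_one]; norm_num
        calc ‖padicChar p (z*ξ) - 1‖^2 ≤ 2^2 := pow_le_pow_left₀ (norm_nonneg _) h2 2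
          _ = 4 := by norm_num
      exact div_le_div₀ (by norm_num) hnum (Real.rpow_pos_of_pos hinvpos _) hden
  have hint : IntegrableOn (fun z : ℚ_[p] => ‖padicChar p (z * ξ) - 1‖ ^ 2 / ‖z‖ ^ (2*s+1))
      {z : ℚ_[p] | ‖z‖ ≤ (p:ℝ) ^ N} μ := by
    apply Measure.integrableOn_of_bounded (M := 4 / ‖ξ⁻¹‖ ^ (2*s+1))
    · rw [measure_ball_val μ hμ N]
      exact ENNReal.ofReal_ne_top
    · apply Measurable.aestronglyMeasurable
      apply Measurable.div
      · exact (((continuous_padicChar.comp (continuous_mul_right ξ)).sub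
          continuous_const).norm.pow 2).measurable
      · exact (continuous_norm.rpow_const (fun z => Or.inr (by positivity))).measurable
    · refine Filter.Eventually.of_forall fun z => ?_
      rw [Real.norm_of_nonneg (hnonneg z)]
      exact hbdd z
  have hmono : (∫ z in {z : ℚ_[p] | ‖z‖ ≤ (p:ℝ) * ‖ξ⁻¹‖},
        ‖padicChar p (z * ξ) - 1‖ ^ 2 / ‖z‖ ^ (2*s+1) ∂μ)
      ≤ ∫ z in {z : ℚ_[p] | ‖z‖ ≤ (p:ℝ) ^ N},
        ‖padicChar p (z * ξ) - 1‖ ^ 2 / ‖z‖ ^ (2*s+1) ∂μ :=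
    setIntegral_mono_set hint (Filter.Eventually.of_forall fun z => hnonneg z)
      (HasSubset.Subset.eventuallyLE hsub)
  have hU := setIntegral_coset_union μ hμ s ξ hξ0
  rw [hC]
  refine le_trans (le_of_eq ?_) (le_trans (le_of_eq hU.symm) hmono)
  -- algebra:  S / p^(2s+1) * ‖ξ‖^(2s) = S / (p * ‖ξ⁻¹‖)^(2s+1) * ‖ξ⁻¹‖
  rw [hinv, Real.mul_rpow (le_of_lt hppos) (by positivity),
    Real.inv_rpow (le_of_lt hξpos)]
  have hXt : ‖ξ‖ ^ (2*s+1) = ‖ξ‖ ^ (2*s) * ‖ξ‖ := by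
    rw [Real.rpow_add hξpos, Real.rpow_one]
  have hXpow_pos : (0:ℝ) < ‖ξ‖ ^ (2*s+1) := Real.rpow_pos_of_pos hξpos _
  field_simp
  rw [hXt]
  ring
end

section
/- Let j : ℝ → [0,∞] be convex, lower semicontinuous with j(0) = 0 and j(r)/|r| → ∞ as |r| → ∞, and let η be a maximal monotone graph in ℝ × ℝ with 0 ∈ η(0) whose inverse is ∂j. Let g_n, w_n be measurable functions on a finite measure space X with g_n(x) ∈ η(w_n(x)) a.e., w_n → w a.e., and ∫_X g_n w_n dμ ≤ C for all n. Then ∫_X j(g_n) dμ ≤ C for all n, and consequently some subsequence of (g_n) converges weakly in L^1(X). -/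
open MeasureTheory Filter Topology

private def trunc (m : ℕ) (r : ℝ) : ℝ := max (-(m:ℝ)) (min r (m:ℝ))

private lemma trunc_abs_le (m : ℕ) (r : ℝ) : |trunc m r| ≤ m := by
  have hm : (0:ℝ) ≤ m := Nat.cast_nonneg m
  rw [abs_le, trunc]
  constructor
  · exact le_max_left _ _
  · exact max_le (by linarith) ((min_le_right _ _))

private lemma trunc_eq_of_abs_le {m : ℕ} {r : ℝ} (h : |r| ≤ m) : trunc m r = r := by
  rw [abs_le] at h
  rw [trunc, min_eq_left h.2, max_eq_right h.1]

private lemma trunc_measurable (m : ℕ) : Measurable (trunc m) :=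
  measurable_const.max ((measurable_id.min measurable_const))

private lemma trunc_key {j : ℝ → ℝ} (hj0 : ∀ r, 0 ≤ j r) {A R' : ℝ} (hA : 0 < A)
    (hR' : 0 ≤ R') (hj : ∀ r : ℝ, R' < |r| → A * |r| ≤ j r)
    {m : ℕ} (hm : R' ≤ (m:ℝ)) (r : ℝ) : A * |r - trunc m r| ≤ j r := by
  by_cases h : |r| ≤ m
  · rw [trunc_eq_of_abs_le h]
    simpa using hj0 r
  · push_neg at h
    have h1 : A * |r| ≤ j r := hj r (lt_of_le_of_lt hm h)
    have h2 : |r - trunc m r| ≤ |r| := by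
      have hm0 : (0:ℝ) ≤ m := le_trans hR' hm
      rcases le_or_gt r (m:ℝ) with hr | hr
      · -- then r < -m since |r| > m
        have hrneg : r < -(m:ℝ) := by
          rcases abs_cases r with ⟨he, _⟩ | ⟨he, _⟩
          · nlinarith [h]
          · nlinarith [h]
        have : trunc m r = -(m:ℝ) := by
          rw [trunc, min_eq_left (by linarith), max_eq_left (by linarith)]
        rw [this]
        rw [abs_of_nonpos (by linarith), abs_of_nonpos (by linarith)]
        linarith
      · have : trunc m r = (m:ℝ) := by
          rw [trunc, min_eq_right (by linarith), max_eq_right (by linarith)]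
        rw [this]
        rw [abs_of_nonneg (by linarith), abs_of_nonneg (by linarith)]
        linarith
    calc A * |r - trunc m r| ≤ A * |r| := by nlinarith
      _ ≤ j r := h1

private lemma cauchySeq_of_approx (u : ℕ → ℝ)
    (h : ∀ ε : ℝ, 0 < ε → ∃ v : ℕ → ℝ, CauchySeq v ∧ ∀ k, |u k - v k| ≤ ε) :
    CauchySeq u := by
  rw [Metric.cauchySeq_iff]
  intro ε hε
  obtain ⟨v, hv, hvu⟩ := h (ε / 4) (by linarith)
  rw [Metric.cauchySeq_iff] at hv
  obtain ⟨N, hN⟩ := hv (ε / 4) (by linarith)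
  refine ⟨N, fun a ha b hb => ?_⟩
  have h1 := hvu a
  have h2 := hvu b
  have h3 := hN a ha b hb
  rw [Real.dist_eq] at *
  have : |u a - u b| ≤ |u a - v a| + |v a - v b| + |v b - u b| := by
    have := abs_sub_le (u a) (v a) (u b)
    have := abs_sub_le (v a) (v b) (u b)
    have : |u a - u b| ≤ |u a - v a| + |v a - u b| := abs_sub_le _ _ _
    have : |v a - u b| ≤ |v a - v b| + |v b - u b| := abs_sub_le _ _ _
    linarith [abs_sub_le (u a) (v a) (u b), abs_sub_le (v a) (v b) (u b)]
  have h4 : |v b - u b| = |u b - v b| := abs_sub_comm _ _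
  linarith

private theorem hilbert_weak_seq_compact {H : Type*} [NormedAddCommGroup H]
    [InnerProductSpace ℝ H] [CompleteSpace H]
    (f : ℕ → ℕ → H) (B : ℕ → ℝ) (hB : ∀ m n, ‖f m n‖ ≤ B m) :
    ∃ φ : ℕ → ℕ, StrictMono φ ∧ ∀ m : ℕ, ∃ G : H, ∀ y : H,
      Tendsto (fun k => (inner ℝ (f m (φ k)) y : ℝ)) atTop (𝓝 (inner ℝ G y)) := by
  classical
  set e : ℕ → H := fun i => f (Nat.unpair i).1 (Nat.unpair i).2 with he
  set s : Set ((ℕ × ℕ) → ℝ) :=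
    Set.pi Set.univ (fun p => Set.Icc (-(B p.1 * ‖e p.2‖)) (B p.1 * ‖e p.2‖)) with hs
  have hcomp : IsCompact s := isCompact_univ_pi fun p => isCompact_Icc
  set x : ℕ → (ℕ × ℕ) → ℝ := fun k p => (inner ℝ (f p.1 k) (e p.2) : ℝ) with hx
  have hmem : ∀ k, x k ∈ s := by
    intro k
    rw [hs, Set.mem_univ_pi]
    intro p
    have h1 : |(inner ℝ (f p.1 k) (e p.2) : ℝ)| ≤ ‖f p.1 k‖ * ‖e p.2‖ :=
      abs_real_inner_le_norm _ _
    have h2 : ‖f p.1 k‖ * ‖e p.2‖ ≤ B p.1 * ‖e p.2‖ :=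
      mul_le_mul_of_nonneg_right (hB _ _) (norm_nonneg _)
    have := abs_le.mp (h1.trans h2)
    exact ⟨this.1, this.2⟩
  obtain ⟨a, -, φ, hφ, hconv⟩ := hcomp.tendsto_subseq hmem
  have hconv' : ∀ p : ℕ × ℕ,
      Tendsto (fun k => (inner ℝ (f p.1 (φ k)) (e p.2) : ℝ)) atTop (𝓝 (a p)) := by
    intro p
    have := tendsto_pi_nhds.mp hconv p
    simpa [hx, Function.comp] using this
  refine ⟨φ, hφ, fun m => ?_⟩
  have hBm : 0 ≤ B m := le_trans (norm_nonneg (f m 0)) (hB m 0)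
  set V := (Submodule.span ℝ (Set.range e)).topologicalClosure with hV
  have hfV : ∀ m' n, f m' n ∈ V := by
    intro m' n
    have : f m' n = e (Nat.pair m' n) := by simp [he, Nat.unpair_pair]
    rw [this]
    exact Submodule.le_topologicalClosure _ (Submodule.subset_span ⟨Nat.pair m' n, rfl⟩)
  have key : ∀ y : H, ∃ L : ℝ,
      Tendsto (fun k => (inner ℝ (f m (φ k)) y : ℝ)) atTop (𝓝 L) := by
    have hspan : ∀ y ∈ Submodule.span ℝ (Set.range e), ∃ L : ℝ,
        Tendsto (fun k => (inner ℝ (f m (φ k)) y : ℝ)) atTop (𝓝 L) := by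
      intro y hy
      induction hy using Submodule.span_induction with
      | mem z hz =>
        obtain ⟨i, rfl⟩ := hz
        exact ⟨a (m, i), hconv' (m, i)⟩
      | zero => exact ⟨0, by simp⟩
      | add z₁ z₂ _ _ h1 h2 =>
        obtain ⟨L1, h1⟩ := h1
        obtain ⟨L2, h2⟩ := h2
        exact ⟨L1 + L2, by simpa [inner_add_right] using h1.add h2⟩
      | smul c z _ h1 =>
        obtain ⟨L1, h1⟩ := h1
        exact ⟨c * L1, by simpa [real_inner_smul_right] using h1.const_mul c⟩
    have hcau : ∀ y ∈ V, CauchySeq (fun k => (inner ℝ (f m (φ k)) y : ℝ)) := by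
      intro y hy
      apply cauchySeq_of_approx
      intro ε hε
      have hy' : y ∈ closure (Submodule.span ℝ (Set.range e) : Set H) := hy
      obtain ⟨z, hz, hdist⟩ := Metric.mem_closure_iff.mp hy' (ε / (B m + 1))
        (by positivity)
      obtain ⟨L, hL⟩ := hspan z hz
      refine ⟨fun k => (inner ℝ (f m (φ k)) z : ℝ), hL.cauchySeq, fun k => ?_⟩
      have : (inner ℝ (f m (φ k)) y : ℝ) - inner ℝ (f m (φ k)) z
          = inner ℝ (f m (φ k)) (y - z) := by rw [inner_sub_right]
      rw [this]
      calc |(inner ℝ (f m (φ k)) (y - z) : ℝ)| ≤ ‖f m (φ k)‖ * ‖y - z‖ :=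
            abs_real_inner_le_norm _ _
        _ ≤ B m * ‖y - z‖ := mul_le_mul_of_nonneg_right (hB _ _) (norm_nonneg _)
        _ ≤ B m * (ε / (B m + 1)) := by
            apply mul_le_mul_of_nonneg_left _ hBm
            rw [← dist_eq_norm]
            exact hdist.le
        _ ≤ ε := by
            rw [div_eq_inv_mul, ← mul_assoc]
            have : B m * (B m + 1)⁻¹ ≤ 1 := by
              rw [mul_inv_le_iff₀ (by linarith)]
              linarith
            nlinarith
    haveI : CompleteSpace V := (Submodule.isClosed_topologicalClosure _).completeSpace_coe
    intro y
    have hyP : ∀ k : ℕ, (inner ℝ (f m (φ k)) y : ℝ)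
        = inner ℝ (f m (φ k)) ((V.orthogonalProjection y : H)) := by
      intro k
      have hperp : y - V.orthogonalProjection y ∈ Vᗮ :=
        V.sub_starProjection_mem_orthogonal y
      have h0 : (inner ℝ (f m (φ k)) (y - V.orthogonalProjection y) : ℝ) = 0 :=
        (Submodule.mem_orthogonal V _).mp hperp _ (hfV m (φ k))
      have : (inner ℝ (f m (φ k)) y : ℝ)
          = inner ℝ (f m (φ k)) ((V.orthogonalProjection y : H))
            + inner ℝ (f m (φ k)) (y - V.orthogonalProjection y) := by
        rw [← inner_add_right]
        congr 1
        abel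
      rw [this, h0, add_zero]
    obtain ⟨L, hL⟩ := cauchySeq_tendsto_of_complete
      (hcau _ (V.orthogonalProjection y).2)
    refine ⟨L, ?_⟩
    have : (fun k => (inner ℝ (f m (φ k)) y : ℝ))
        = fun k => (inner ℝ (f m (φ k)) ((V.orthogonalProjection y : H)) : ℝ) :=
      funext hyP
    rw [this]
    exact hL
  choose L hL using key
  have hadd : ∀ y z : H, L (y + z) = L y + L z := by
    intro y z
    refine tendsto_nhds_unique (hL (y + z)) ?_
    simpa [inner_add_right] using (hL y).add (hL z)
  have hsmul : ∀ (c : ℝ) (y : H), L (c • y) = c * L y := by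
    intro c y
    refine tendsto_nhds_unique (hL (c • y)) ?_
    simpa [real_inner_smul_right] using (hL y).const_mul c
  have hbound : ∀ y : H, |L y| ≤ B m * ‖y‖ := by
    intro y
    have h1 : Tendsto (fun k => |(inner ℝ (f m (φ k)) y : ℝ)|) atTop (𝓝 |L y|) :=
      (hL y).abs
    refine le_of_tendsto h1 (Eventually.of_forall fun k => ?_)
    exact (abs_real_inner_le_norm _ _).trans
      (mul_le_mul_of_nonneg_right (hB _ _) (norm_nonneg _))
  let ℓ : H →ₗ[ℝ] ℝ :=
    { toFun := L
      map_add' := hadd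
      map_smul' := hsmul }
  let ℓc : H →L[ℝ] ℝ := LinearMap.mkContinuous ℓ (B m)
    (fun y => by simpa [ℓ, Real.norm_eq_abs] using hbound y)
  refine ⟨(InnerProductSpace.toDual ℝ H).symm ℓc, fun y => ?_⟩
  have : (inner ℝ ((InnerProductSpace.toDual ℝ H).symm ℓc) y : ℝ) = ℓc y :=
    InnerProductSpace.toDual_symm_apply
  rw [this]
  exact hL y

/-- If `η` is a maximal monotone graph in `ℝ × ℝ` with `0 ∈ η(0)` whose inverse is the
subdifferential of a convex superlinear `j ≥ 0` with `j(0)=0`, and `g_n ∈ η(w_n)` a.e.,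
`w_n → w` a.e., with `∫ g_n w_n dμ ≤ C`, then `∫ j(g_n) dμ ≤ C` for all `n` and a
subsequence of `(g_n)` converges weakly in `L¹`. -/
theorem weak_L1_compactness_of_monotone_graph {X : Type*} [MeasurableSpace X]
    (μ : Measure X) [IsFiniteMeasure μ]
    (j : ℝ → ℝ) (hj0 : ∀ r, 0 ≤ j r) (hjc : ConvexOn ℝ Set.univ j)
    (hjlsc : LowerSemicontinuous j) (hj00 : j 0 = 0)
    (hsup : ∀ A : ℝ, 0 < A → ∃ R : ℝ, ∀ r : ℝ, R < |r| → A * |r| ≤ j r)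
    (η : Set (ℝ × ℝ))
    (hmono : ∀ a ∈ η, ∀ b ∈ η, 0 ≤ (a.1 - b.1) * (a.2 - b.2))
    (hmax : ∀ c : ℝ × ℝ, (∀ a ∈ η, 0 ≤ (c.1 - a.1) * (c.2 - a.2)) → c ∈ η)
    (h00 : ((0 : ℝ), (0 : ℝ)) ∈ η)
    (hinv : ∀ w g : ℝ, (w, g) ∈ η ↔ ∀ v : ℝ, j g + w * (v - g) ≤ j v)
    (g w : ℕ → X → ℝ) (hg : ∀ n, Measurable (g n)) (hwm : ∀ n, Measurable (w n))
    (W : X → ℝ)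
    (hgw : ∀ n, ∀ᵐ x ∂μ, (w n x, g n x) ∈ η)
    (hconv : ∀ᵐ x ∂μ, Tendsto (fun n => w n x) atTop (nhds (W x)))
    (C : ℝ) (hint : ∀ n, Integrable (fun x => g n x * w n x) μ)
    (hC : ∀ n, ∫ x, g n x * w n x ∂μ ≤ C) :
    (∀ n, ∫⁻ x, ENNReal.ofReal (j (g n x)) ∂μ ≤ ENNReal.ofReal C) ∧
    ∃ φ : ℕ → ℕ, StrictMono φ ∧ ∃ G : X → ℝ, Integrable G μ ∧
      ∀ v : X → ℝ, Measurable v → (∃ M : ℝ, ∀ x, |v x| ≤ M) →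
        Tendsto (fun k => ∫ x, g (φ k) x * v x ∂μ) atTop
          (nhds (∫ x, G x * v x ∂μ)) := by
  classical
  -- pointwise subdifferential inequality
  have hjle : ∀ n, ∀ᵐ x ∂μ, j (g n x) ≤ g n x * w n x := by
    intro n
    filter_upwards [hgw n] with x hx
    have h1 := (hinv _ _).mp hx 0
    rw [hj00] at h1
    nlinarith [h1]
  have hpos : ∀ n, ∀ᵐ x ∂μ, 0 ≤ g n x * w n x := by
    intro n
    filter_upwards [hjle n] with x hx
    exact le_trans (hj0 _) hx
  -- part 1
  have part1 : ∀ n, ∫⁻ x, ENNReal.ofReal (j (g n x)) ∂μ ≤ ENNReal.ofReal C := by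
    intro n
    calc ∫⁻ x, ENNReal.ofReal (j (g n x)) ∂μ
        ≤ ∫⁻ x, ENNReal.ofReal (g n x * w n x) ∂μ := by
          refine lintegral_mono_ae ?_
          filter_upwards [hjle n] with x hx
          exact ENNReal.ofReal_le_ofReal hx
      _ = ENNReal.ofReal (∫ x, g n x * w n x ∂μ) :=
          (ofReal_integral_eq_lintegral_ofReal (hint n) (hpos n)).symm
      _ ≤ ENNReal.ofReal C := ENNReal.ofReal_le_ofReal (hC n)
  have hC0 : 0 ≤ C := le_trans (integral_nonneg_of_ae (hpos 0)) (hC 0)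
  -- integrability of g n
  have hgint : ∀ n, Integrable (g n) μ := by
    obtain ⟨R, hR⟩ := hsup 1 one_pos
    set R' := max R 0 with hR'
    have habs : ∀ r : ℝ, |r| ≤ j r + R' := by
      intro r
      by_cases h : R' < |r|
      · have := hR r (lt_of_le_of_lt (le_max_left _ _) h)
        have h0 : (0:ℝ) ≤ R' := le_max_right _ _
        linarith [this]
      · push_neg at h
        linarith [hj0 r]
    intro n
    refine Integrable.mono' ((hint n).add (integrable_const R')) (hg n).aestronglyMeasurable ?_
    filter_upwards [hjle n] with x hx
    calc ‖g n x‖ = |g n x| := rfl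
      _ ≤ j (g n x) + R' := habs _
      _ ≤ g n x * w n x + R' := by linarith
  -- uniform integrability of tails
  have hUI : ∀ A : ℝ, 0 < A → ∃ m₀ : ℕ, ∀ m : ℕ, m₀ ≤ m → ∀ n : ℕ,
      ∫ x, |g n x - trunc m (g n x)| ∂μ ≤ C / A := by
    intro A hA
    obtain ⟨R, hR⟩ := hsup A hA
    set R' := max R 0 with hR'def
    have hR'0 : (0:ℝ) ≤ R' := le_max_right _ _
    have hR'j : ∀ r : ℝ, R' < |r| → A * |r| ≤ j r := fun r hr =>
      hR r (lt_of_le_of_lt (le_max_left _ _) hr)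
    refine ⟨⌈R'⌉₊, fun m hm n => ?_⟩
    have hmR : R' ≤ (m:ℝ) := le_trans (Nat.le_ceil R') (Nat.cast_le.mpr hm)
    have hptwise : ∀ᵐ x ∂μ, |g n x - trunc m (g n x)| ≤ (g n x * w n x) / A := by
      filter_upwards [hjle n] with x hx
      have := trunc_key hj0 hA hR'0 hR'j hmR (g n x)
      rw [le_div_iff₀ hA]
      nlinarith [this]
    have hint1 : Integrable (fun x => |g n x - trunc m (g n x)|) μ := by
      refine Integrable.abs ?_
      refine (hgint n).sub ?_
      refine memLp_one_iff_integrable.mp ?_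
      refine MemLp.of_bound ((trunc_measurable m).comp (hg n)).aestronglyMeasurable
        (m : ℝ) ?_
      exact Eventually.of_forall fun x => by
        simpa [Real.norm_eq_abs] using trunc_abs_le m (g n x)
    calc ∫ x, |g n x - trunc m (g n x)| ∂μ
        ≤ ∫ x, (g n x * w n x) / A ∂μ :=
          integral_mono_ae hint1 ((hint n).div_const A) hptwise
      _ = (∫ x, g n x * w n x ∂μ) / A := integral_div A _
      _ ≤ C / A := div_le_div_of_nonneg_right (hC n) hA.le
  -- L² truncation machinery
  set F : ℕ → ℕ → X → ℝ := fun m n x => trunc m (g n x) with hF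
  have hFmeas : ∀ m n, Measurable (F m n) := fun m n => (trunc_measurable m).comp (hg n)
  have hFbdd : ∀ m n x, ‖F m n x‖ ≤ (m:ℝ) := fun m n x => by
    simpa [Real.norm_eq_abs, hF] using trunc_abs_le m (g n x)
  have hFmem : ∀ m n, MemLp (F m n) 2 μ := fun m n =>
    MemLp.of_bound (hFmeas m n).aestronglyMeasurable (m:ℝ)
      (Eventually.of_forall fun x => hFbdd m n x)
  set fL : ℕ → ℕ → Lp ℝ 2 μ := fun m n => (hFmem m n).toLp _ with hfL
  have hB : ∀ m n, ‖fL m n‖ ≤ (measureUnivNNReal μ : ℝ) ^ ((2 : ENNReal).toReal)⁻¹ * m := by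
    intro m n
    refine Lp.norm_le_of_ae_bound (Nat.cast_nonneg m) ?_
    filter_upwards [(hFmem m n).coeFn_toLp] with x hx
    rw [hx]
    exact hFbdd m n x
  obtain ⟨φ, hφ, hWk⟩ := hilbert_weak_seq_compact fL _ hB
  choose Glim hGL using hWk
  -- inner product bridge
  have hinner : ∀ (q : Lp ℝ 2 μ) (v : X → ℝ) (hv : MemLp v 2 μ),
      (inner ℝ q (hv.toLp v) : ℝ) = ∫ x, q x * v x ∂μ := by
    intro q v hv
    rw [L2.inner_def]
    refine integral_congr_ae ?_
    filter_upwards [hv.coeFn_toLp] with x hx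
    rw [hx, RCLike.inner_apply, conj_trivial, mul_comm]
  -- weak convergence at the level of functions
  have hweak : ∀ (v : X → ℝ), Measurable v → (∃ M : ℝ, ∀ x, |v x| ≤ M) → ∀ m : ℕ,
      Tendsto (fun k => ∫ x, F m (φ k) x * v x ∂μ) atTop
        (𝓝 (∫ x, (Glim m : X → ℝ) x * v x ∂μ)) := by
    rintro v hv ⟨M, hM⟩ m
    have hvmem : MemLp v 2 μ := MemLp.of_bound hv.aestronglyMeasurable M
      (Eventually.of_forall fun x => by simpa [Real.norm_eq_abs] using hM x)
    have h1 := hGL m (hvmem.toLp v)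
    have h2 : (fun k => (inner ℝ (fL m (φ k)) (hvmem.toLp v) : ℝ))
        = fun k => ∫ x, F m (φ k) x * v x ∂μ := by
      funext k
      rw [hinner]
      refine integral_congr_ae ?_
      filter_upwards [(hFmem m (φ k)).coeFn_toLp] with x hx
      rw [hx]
    rw [h2, hinner (Glim m) v hvmem] at h1
    exact h1
  -- integrability facts
  have hGLmeas : ∀ m, Measurable ((Glim m : X → ℝ)) := fun m =>
    ((Glim m : X →ₘ[μ] ℝ).stronglyMeasurable).measurable
  have hGLint : ∀ m, Integrable ((Glim m : X → ℝ)) μ := fun m =>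
    memLp_one_iff_integrable.mp ((Lp.memLp (Glim m)).mono_exponent one_le_two)
  have hFint : ∀ m n, Integrable (F m n) μ := fun m n =>
    memLp_one_iff_integrable.mp ((hFmem m n).mono_exponent one_le_two)
  -- L¹ Cauchy estimate for the weak limits
  have hdiff : ∀ A : ℝ, 0 < A → ∃ m₀ : ℕ, ∀ m m' : ℕ, m₀ ≤ m → m₀ ≤ m' →
      ∫ x, |(Glim m : X → ℝ) x - (Glim m' : X → ℝ) x| ∂μ ≤ 2 * (C / A) := by
    intro A hA
    obtain ⟨m₀, hm₀⟩ := hUI A hA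
    refine ⟨m₀, fun m m' hm hm' => ?_⟩
    set u : X → ℝ :=
      fun x => if 0 ≤ (Glim m : X → ℝ) x - (Glim m' : X → ℝ) x then 1 else -1 with hu
    have humeas : Measurable u := Measurable.ite
      (measurableSet_le measurable_const ((hGLmeas m).sub (hGLmeas m')))
      measurable_const measurable_const
    have hubdd : ∀ x, |u x| ≤ 1 := by
      intro x; rw [hu]; dsimp only; split <;> simp
    have habs_eq : ∫ x, |(Glim m : X → ℝ) x - (Glim m' : X → ℝ) x| ∂μ
        = ∫ x, ((Glim m : X → ℝ) x - (Glim m' : X → ℝ) x) * u x ∂μ := by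
      refine integral_congr_ae (Eventually.of_forall fun x => ?_)
      rw [hu]; dsimp only; split
      · rename_i hh; rw [mul_one, abs_of_nonneg hh]
      · rename_i hh; push_neg at hh
        rw [abs_of_neg hh]; ring
    have hmul_int : ∀ m'' : ℕ, Integrable (fun x => (Glim m'' : X → ℝ) x * u x) μ := by
      intro m''
      have := Integrable.bdd_mul (hGLint m'') humeas.aestronglyMeasurable
        (c := 1) (Eventually.of_forall fun x => by simpa [Real.norm_eq_abs] using hubdd x)
      simpa [mul_comm] using this
    have hsub_eq : ∫ x, ((Glim m : X → ℝ) x - (Glim m' : X → ℝ) x) * u x ∂μ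
        = (∫ x, (Glim m : X → ℝ) x * u x ∂μ) - ∫ x, (Glim m' : X → ℝ) x * u x ∂μ := by
      rw [← integral_sub (hmul_int m) (hmul_int m')]
      refine integral_congr_ae (Eventually.of_forall fun x => ?_)
      ring
    have hlim : Tendsto
        (fun k => (∫ x, F m (φ k) x * u x ∂μ) - ∫ x, F m' (φ k) x * u x ∂μ) atTop
        (𝓝 ((∫ x, (Glim m : X → ℝ) x * u x ∂μ) - ∫ x, (Glim m' : X → ℝ) x * u x ∂μ)) :=
      (hweak u humeas ⟨1, hubdd⟩ m).sub (hweak u humeas ⟨1, hubdd⟩ m')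
    have hbound : ∀ k, |(∫ x, F m (φ k) x * u x ∂μ) - ∫ x, F m' (φ k) x * u x ∂μ|
        ≤ 2 * (C / A) := by
      intro k
      set n := φ k with hn
      have hFu_int : ∀ m'' : ℕ, Integrable (fun x => F m'' n x * u x) μ := by
        intro m''
        have := Integrable.bdd_mul (hFint m'' n) humeas.aestronglyMeasurable
          (c := 1) (Eventually.of_forall fun x => by simpa [Real.norm_eq_abs] using hubdd x)
        simpa [mul_comm] using this
      rw [← integral_sub (hFu_int m) (hFu_int m')]
      have hi1 : Integrable (fun x => |g n x - trunc m (g n x)|) μ :=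
        ((hgint n).sub (hFint m n)).abs
      have hi2 : Integrable (fun x => |g n x - trunc m' (g n x)|) μ :=
        ((hgint n).sub (hFint m' n)).abs
      have hiL : Integrable (fun x => |F m n x * u x - F m' n x * u x|) μ :=
        ((hFu_int m).sub (hFu_int m')).abs
      have h1 : |∫ x, (F m n x * u x - F m' n x * u x) ∂μ|
          ≤ ∫ x, |F m n x * u x - F m' n x * u x| ∂μ := by
        simpa [Real.norm_eq_abs] using
          norm_integral_le_integral_norm (fun x => F m n x * u x - F m' n x * u x)
      refine h1.trans ?_
      have h2 : ∫ x, |F m n x * u x - F m' n x * u x| ∂μ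
          ≤ ∫ x, (|g n x - trunc m (g n x)| + |g n x - trunc m' (g n x)|) ∂μ := by
        refine integral_mono hiL (hi1.add hi2) ?_
        intro x
        show |F m n x * u x - F m' n x * u x|
            ≤ |g n x - trunc m (g n x)| + |g n x - trunc m' (g n x)|
        have heq : |F m n x * u x - F m' n x * u x| = |F m n x - F m' n x| * |u x| := by
          rw [← abs_mul]; ring_nf
        rw [heq]
        calc |F m n x - F m' n x| * |u x| ≤ |F m n x - F m' n x| * 1 :=
              mul_le_mul_of_nonneg_left (hubdd x) (abs_nonneg _)
          _ = |F m n x - F m' n x| := mul_one _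
          _ ≤ |F m n x - g n x| + |g n x - F m' n x| := abs_sub_le _ _ _
          _ = |g n x - trunc m (g n x)| + |g n x - trunc m' (g n x)| := by
              rw [abs_sub_comm]
      refine h2.trans ?_
      rw [integral_add hi1 hi2]
      have e1 := hm₀ m hm n
      have e2 := hm₀ m' hm' n
      linarith [e1, e2]
    rw [habs_eq, hsub_eq]
    exact le_trans (le_abs_self _) (le_of_tendsto hlim.abs (Eventually.of_forall hbound))
  -- pass to L¹ and take the limit
  set Em : ℕ → Lp ℝ 1 μ := fun m =>
    ((Lp.memLp (Glim m)).mono_exponent one_le_two).toLp _ with hEm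
  have hEmcoe : ∀ m, (Em m : X → ℝ) =ᵐ[μ] (Glim m : X → ℝ) := fun m =>
    MemLp.coeFn_toLp _
  have hnorm_eq : ∀ m m' : ℕ, ‖Em m - Em m'‖
      = ∫ x, |(Glim m : X → ℝ) x - (Glim m' : X → ℝ) x| ∂μ := by
    intro m m'
    rw [L1.norm_eq_integral_norm]
    refine integral_congr_ae ?_
    filter_upwards [Lp.coeFn_sub (Em m) (Em m'), hEmcoe m, hEmcoe m'] with x h1 h2 h3
    rw [Real.norm_eq_abs, h1, Pi.sub_apply, h2, h3]
  have hcauchy : CauchySeq Em := by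
    rw [Metric.cauchySeq_iff']
    intro ε hε
    have hA : (0:ℝ) < (4*C+1)/ε := by positivity
    obtain ⟨m₀, hm₀⟩ := hdiff _ hA
    refine ⟨m₀, fun m hm => ?_⟩
    rw [dist_eq_norm, hnorm_eq]
    have hb := hm₀ m m₀ hm (le_refl m₀)
    have h1 : 2 * (C / ((4*C+1)/ε)) < ε := by
      have hx : C / ((4*C+1)/ε) = C * ε / (4*C+1) := div_div_eq_mul_div _ _ _
      have h2 : (0:ℝ) < 4*C+1 := by linarith
      rw [hx, ← mul_div_assoc, div_lt_iff₀ h2]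
      nlinarith
    linarith
  obtain ⟨G1, hG1⟩ := cauchySeq_tendsto_of_complete hcauchy
  refine ⟨part1, φ, hφ, (G1 : X → ℝ), L1.integrable_coeFn G1, ?_⟩
  rintro v hv ⟨M₀, hM₀⟩
  set M : ℝ := max M₀ 0 with hMdef
  have hM : ∀ x, |v x| ≤ M := fun x => le_trans (hM₀ x) (le_max_left _ _)
  have hM0 : (0:ℝ) ≤ M := le_max_right _ _
  have hG1int : Integrable ((G1 : X → ℝ)) μ := L1.integrable_coeFn G1
  have hmulint : ∀ (h : X → ℝ), Integrable h μ → Integrable (fun x => h x * v x) μ := by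
    intro h hh
    have := Integrable.bdd_mul hh hv.aestronglyMeasurable
      (c := M) (Eventually.of_forall fun x => by simpa [Real.norm_eq_abs] using hM x)
    simpa [mul_comm] using this
  have habs3 : ∀ (h1 h2 : X → ℝ), Integrable h1 μ → Integrable h2 μ →
      |(∫ x, h1 x * v x ∂μ) - ∫ x, h2 x * v x ∂μ| ≤ M * ∫ x, |h1 x - h2 x| ∂μ := by
    intro h1 h2 hh1 hh2
    rw [← integral_sub (hmulint h1 hh1) (hmulint h2 hh2)]
    have e1 : |∫ x, (h1 x * v x - h2 x * v x) ∂μ|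
        ≤ ∫ x, |h1 x * v x - h2 x * v x| ∂μ := by
      simpa [Real.norm_eq_abs] using
        norm_integral_le_integral_norm (fun x => h1 x * v x - h2 x * v x)
    refine e1.trans ?_
    have hi1 : Integrable (fun x => |h1 x * v x - h2 x * v x|) μ :=
      ((hmulint h1 hh1).sub (hmulint h2 hh2)).abs
    have hi2 : Integrable (fun x => M * |h1 x - h2 x|) μ :=
      ((hh1.sub hh2).abs.const_mul M)
    have e2 : ∫ x, |h1 x * v x - h2 x * v x| ∂μ ≤ ∫ x, M * |h1 x - h2 x| ∂μ := by
      refine integral_mono hi1 hi2 ?_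
      intro x
      show |h1 x * v x - h2 x * v x| ≤ M * |h1 x - h2 x|
      have heq : |h1 x * v x - h2 x * v x| = |h1 x - h2 x| * |v x| := by
        rw [← abs_mul]; ring_nf
      rw [heq]
      calc |h1 x - h2 x| * |v x| ≤ |h1 x - h2 x| * M :=
            mul_le_mul_of_nonneg_left (hM x) (abs_nonneg _)
        _ = M * |h1 x - h2 x| := mul_comm _ _
    refine e2.trans ?_
    rw [integral_const_mul]
  rw [Metric.tendsto_atTop]
  intro ε hε
  set ε' : ℝ := ε / (3 * (M + 1)) with hε'def
  have hε' : (0:ℝ) < ε' := by positivity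
  have hA : (0:ℝ) < (C+1)/ε' := by positivity
  obtain ⟨m₀, hm₀⟩ := hUI _ hA
  have hCA : C / ((C+1)/ε') ≤ ε' := by
    rw [div_div_eq_mul_div, div_le_iff₀ (by positivity)]
    nlinarith
  obtain ⟨m₁, hm₁⟩ := Metric.tendsto_atTop.mp hG1 ε' hε'
  set m : ℕ := max m₀ m₁ with hmdef
  have hnorm3 : ‖Em m - G1‖ = ∫ x, |(Glim m : X → ℝ) x - (G1 : X → ℝ) x| ∂μ := by
    rw [L1.norm_eq_integral_norm]
    refine integral_congr_ae ?_
    filter_upwards [Lp.coeFn_sub (Em m) G1, hEmcoe m] with x h1 h2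
    rw [Real.norm_eq_abs, h1, Pi.sub_apply, h2]
  have ht3 : |(∫ x, (Glim m : X → ℝ) x * v x ∂μ) - ∫ x, (G1 : X → ℝ) x * v x ∂μ|
      ≤ M * ε' := by
    refine le_trans (habs3 _ _ (hGLint m) hG1int) ?_
    refine mul_le_mul_of_nonneg_left ?_ hM0
    rw [← hnorm3]
    have := hm₁ m (le_max_right _ _)
    rw [dist_eq_norm] at this
    exact this.le
  obtain ⟨N, hN⟩ := Metric.tendsto_atTop.mp (hweak v hv ⟨M, hM⟩ m) ε' hε'
  refine ⟨N, fun k hk => ?_⟩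
  have ht2 : |(∫ x, F m (φ k) x * v x ∂μ) - ∫ x, (Glim m : X → ℝ) x * v x ∂μ| < ε' := by
    have := hN k hk
    rwa [Real.dist_eq] at this
  have ht1 : |(∫ x, g (φ k) x * v x ∂μ) - ∫ x, F m (φ k) x * v x ∂μ| ≤ M * ε' := by
    refine le_trans (habs3 _ _ (hgint (φ k)) (hFint m (φ k))) ?_
    refine le_trans (mul_le_mul_of_nonneg_left (hm₀ m (le_max_left _ _) (φ k)) hM0) ?_
    exact mul_le_mul_of_nonneg_left hCA hM0
  rw [Real.dist_eq]
  have htri : |(∫ x, g (φ k) x * v x ∂μ) - ∫ x, (G1 : X → ℝ) x * v x ∂μ|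
      ≤ |(∫ x, g (φ k) x * v x ∂μ) - ∫ x, F m (φ k) x * v x ∂μ|
        + |(∫ x, F m (φ k) x * v x ∂μ) - ∫ x, (Glim m : X → ℝ) x * v x ∂μ|
        + |(∫ x, (Glim m : X → ℝ) x * v x ∂μ) - ∫ x, (G1 : X → ℝ) x * v x ∂μ| := by
    have t1 := abs_sub_le (∫ x, g (φ k) x * v x ∂μ) (∫ x, F m (φ k) x * v x ∂μ)
      (∫ x, (G1 : X → ℝ) x * v x ∂μ)
    have t2 := abs_sub_le (∫ x, F m (φ k) x * v x ∂μ) (∫ x, (Glim m : X → ℝ) x * v x ∂μ)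
      (∫ x, (G1 : X → ℝ) x * v x ∂μ)
    linarith
  have hfin : (2 * M + 1) * ε' < ε := by
    have : ε = 3 * (M + 1) * ε' := by
      rw [hε'def]; field_simp
    rw [this]
    nlinarith
  calc |(∫ x, g (φ k) x * v x ∂μ) - ∫ x, (G1 : X → ℝ) x * v x ∂μ|
      ≤ _ + _ + _ := htri
    _ < M * ε' + ε' + M * ε' := by linarith
    _ = (2 * M + 1) * ε' := by ring
    _ < ε := hfin
end

section
/- Let X be a set with a finite measure μ, j : ℝ → [0,∞] convex lower semicontinuous with j(0) = 0, and suppose u_n → u weakly in L^1(X, μ). Then ∫_X j(u) dμ ≤ liminf_n ∫_X j(u_n) dμ; in particular, the functional Ψ(u) = ∫_X j(u) dμ is weakly lower semicontinuous on L^1(X, μ). -/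
open MeasureTheory Filter Topology ENNReal


private lemma jsep {j : ℝ → ℝ≥0∞}
    (hjc : ∀ a b t : ℝ, 0 ≤ t → t ≤ 1 →
      j (t * a + (1 - t) * b) ≤ ENNReal.ofReal t * j a + ENNReal.ofReal (1 - t) * j b)
    (hjlsc : LowerSemicontinuous j) (hj0 : j 0 = 0)
    {s₀ c : ℝ} (hc : 0 ≤ c) (hlt : ENNReal.ofReal c < j s₀) :
    ∃ a b : ℝ, (∀ s, ENNReal.ofReal (a * s + b) ≤ j s) ∧ c < a * s₀ + b := by
  classical
  set epi : Set (ℝ × ℝ) := {p | 0 ≤ p.2 ∧ j p.1 ≤ ENNReal.ofReal p.2} with hepi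
  have hconv : Convex ℝ epi := by
    intro x hx y hy t1 t2 ht1 ht2 hsum
    constructor
    · have h2 : (t1 • x + t2 • y).2 = t1 * x.2 + t2 * y.2 := rfl
      rw [h2]
      have := hx.1; have := hy.1
      nlinarith
    · have h2 : (t1 • x + t2 • y).2 = t1 * x.2 + t2 * y.2 := rfl
      have h1 : (t1 • x + t2 • y).1 = t1 * x.1 + t2 * y.1 := rfl
      rw [h1, h2]
      have ht2' : t2 = 1 - t1 := by linarith
      subst ht2'
      calc j (t1 * x.1 + (1 - t1) * y.1)
          ≤ ENNReal.ofReal t1 * j x.1 + ENNReal.ofReal (1 - t1) * j y.1 :=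
            hjc _ _ _ ht1 (by linarith)
        _ ≤ ENNReal.ofReal t1 * ENNReal.ofReal x.2
              + ENNReal.ofReal (1 - t1) * ENNReal.ofReal y.2 := by
            gcongr
            exacts [hx.2, hy.2]
        _ = ENNReal.ofReal (t1 * x.2 + (1 - t1) * y.2) := by
            rw [← ENNReal.ofReal_mul ht1, ← ENNReal.ofReal_mul (by linarith),
              ← ENNReal.ofReal_add (by nlinarith [hx.1]) (by nlinarith [hy.1])]
  have hclosed : IsClosed epi := by
    have h1 : IsClosed {p : ℝ × ℝ | 0 ≤ p.2} :=
      isClosed_le continuous_const continuous_snd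
    have h2 : IsClosed {p : ℝ × ℝ | j p.1 ≤ ENNReal.ofReal p.2} := by
      rw [← isOpen_compl_iff, isOpen_iff_mem_nhds]
      intro p hp
      have hp' : ENNReal.ofReal p.2 < j p.1 := not_le.1 hp
      obtain ⟨r, hr0, hr1, hr2⟩ := ENNReal.lt_iff_exists_real_btwn.1 hp'
      have hU : {s : ℝ | ENNReal.ofReal r < j s} ∈ 𝓝 p.1 := hjlsc p.1 _ hr2
      have hpr : p.2 < r := by
        by_contra h
        exact absurd (ENNReal.ofReal_le_ofReal (not_lt.1 h)) (not_le.2 hr1)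
      have hV : Set.Iio r ∈ 𝓝 p.2 := Iio_mem_nhds hpr
      refine Filter.mem_of_superset (prod_mem_nhds hU hV) ?_
      rintro ⟨s, t⟩ ⟨hs, ht⟩
      simp only [Set.mem_compl_iff, Set.mem_setOf_eq, not_le]
      exact lt_of_le_of_lt (ENNReal.ofReal_le_ofReal (le_of_lt ht)) hs
    exact h1.inter h2
  have hnot : (s₀, c) ∉ epi := fun h => absurd h.2 (not_le.2 hlt)
  obtain ⟨f, γ, hfx, hfs⟩ := geometric_hahn_banach_point_closed hconv hclosed hnot
  set α := f (1, 0) with hα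
  set β := f (0, 1) with hβ
  have hf : ∀ p : ℝ × ℝ, f p = p.1 * α + p.2 * β := by
    intro p
    have hp : p = p.1 • ((1 : ℝ), (0 : ℝ)) + p.2 • ((0 : ℝ), (1 : ℝ)) := by
      ext <;> simp
    conv_lhs => rw [hp]
    rw [map_add, f.map_smul, f.map_smul, smul_eq_mul, smul_eq_mul]
  have hsep : ∀ p ∈ epi, γ < p.1 * α + p.2 * β := by
    intro p hp; have := hfs p hp; rwa [hf] at this
  have hpt : s₀ * α + c * β < γ := by have := hfx; rwa [hf] at this
  have hzeroM : ∀ M : ℝ, 0 ≤ M → γ < M * β := by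
    intro M hM
    have h0 : ((0 : ℝ), M) ∈ epi := ⟨hM, by rw [hj0]; exact zero_le⟩
    have := hsep _ h0
    simpa using this
  have hγ : γ < 0 := by simpa using hzeroM 0 le_rfl
  have hβ0 : 0 ≤ β := by
    by_contra h
    push_neg at h
    have := hzeroM (γ / β) (le_of_lt (div_pos_of_neg_of_neg hγ h))
    rw [div_mul_cancel₀ _ (ne_of_lt h)] at this
    exact lt_irrefl _ this
  have hdom : ∀ s : ℝ, j s ≠ ∞ → γ < s * α + (j s).toReal * β := by
    intro s hs
    exact hsep (s, (j s).toReal)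
      ⟨ENNReal.toReal_nonneg, le_of_eq (ENNReal.ofReal_toReal hs).symm⟩
  rcases eq_or_lt_of_le hβ0 with hβ0' | hβpos
  · -- β = 0 case
    have hα0 : ∀ s : ℝ, j s ≠ ∞ → γ < s * α := by
      intro s hs; have := hdom s hs; rwa [← hβ0', mul_zero, add_zero] at this
    have hs₀ : s₀ * α < γ := by rwa [← hβ0', mul_zero, add_zero] at hpt
    have hden : 0 < γ - α * s₀ := by nlinarith
    refine ⟨-((c + 1) / (γ - α * s₀)) * α, (c + 1) / (γ - α * s₀) * γ, ?_, ?_⟩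
    · intro s
      by_cases hs : j s = ∞
      · rw [hs]; exact le_top
      · have h1 := hα0 s hs
        have hM : 0 < (c + 1) / (γ - α * s₀) := by positivity
        have hle : -((c + 1) / (γ - α * s₀)) * α * s + (c + 1) / (γ - α * s₀) * γ ≤ 0 := by
          nlinarith
        rw [ENNReal.ofReal_eq_zero.2 hle]
        exact zero_le
    · have heq : -((c + 1) / (γ - α * s₀)) * α * s₀ + (c + 1) / (γ - α * s₀) * γ
          = (c + 1) / (γ - α * s₀) * (γ - α * s₀) := by ring
      rw [heq, div_mul_cancel₀ _ (ne_of_gt hden)]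
      linarith
  · -- β > 0 case
    refine ⟨-α / β, γ / β, ?_, ?_⟩
    · intro s
      by_cases hs : j s = ∞
      · rw [hs]; exact le_top
      · have h1 := hdom s hs
        have h2 : -α / β * s + γ / β ≤ (j s).toReal := by
          rw [div_mul_eq_mul_div, ← add_div, div_le_iff₀ hβpos]
          nlinarith
        calc ENNReal.ofReal (-α / β * s + γ / β) ≤ ENNReal.ofReal (j s).toReal :=
              ENNReal.ofReal_le_ofReal h2
          _ = j s := ENNReal.ofReal_toReal hs
    · rw [div_mul_eq_mul_div, ← add_div, lt_div_iff₀ hβpos]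
      nlinarith

private lemma jrat' {j : ℝ → ℝ≥0∞} {s₀ c a b : ℝ}
    (hmin : ∀ s, ENNReal.ofReal (a * s + b) ≤ j s)
    (hc : 0 ≤ c) (hval : c < a * s₀ + b) :
    ∃ q r : ℚ, (∀ s, ENNReal.ofReal ((q : ℝ) * s + (r : ℝ)) ≤ j s) ∧ c < (q : ℝ) * s₀ + (r : ℝ) := by
  by_cases ha : a = 0
  · subst ha
    obtain ⟨r, hr1, hr2⟩ := exists_rat_btwn (by linarith : c < b)
    refine ⟨0, r, fun s => ?_, by push_cast; linarith⟩
    calc ENNReal.ofReal ((0 : ℚ) * s + (r : ℝ)) ≤ ENNReal.ofReal (0 * s + b) := by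
          apply ENNReal.ofReal_le_ofReal; push_cast; linarith
      _ ≤ j s := hmin s
  · set P := a * s₀ + b with hP
    have hPpos : 0 < P := lt_of_le_of_lt hc hval
    set t₀ : ℝ := (c / P + 1) / 2 with ht₀
    have hcP : c / P < 1 := (div_lt_one hPpos).2 hval
    have hcP0 : 0 ≤ c / P := div_nonneg hc hPpos.le
    have ht₀1 : t₀ < 1 := by rw [ht₀]; linarith
    have ht₀pos : 0 < t₀ := by rw [ht₀]; linarith
    have ht₀c : c < t₀ * P := by
      have : c / P < t₀ := by rw [ht₀]; linarith
      calc c = c / P * P := by field_simp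
        _ < t₀ * P := by nlinarith
    obtain ⟨q, hq2⟩ : ∃ q : ℚ, (t₀ * a < q ∧ (q : ℝ) < a) ∨ (a < q ∧ (q : ℝ) < t₀ * a) := by
      rcases lt_or_gt_of_ne ha with h | h
      · obtain ⟨q, h1, h2⟩ := exists_rat_btwn (show a < t₀ * a by nlinarith)
        exact ⟨q, Or.inr ⟨h1, h2⟩⟩
      · obtain ⟨q, h1, h2⟩ := exists_rat_btwn (show t₀ * a < a by nlinarith)
        exact ⟨q, Or.inl ⟨h1, h2⟩⟩
    set t : ℝ := (q : ℝ) / a with ht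
    have hqa : t * a = (q : ℝ) := div_mul_cancel₀ _ ha
    have ht01 : t₀ < t ∧ t < 1 := by
      rcases hq2 with ⟨h1, h2⟩ | ⟨h1, h2⟩
      · rcases lt_or_gt_of_ne ha with hneg | hpos
        · constructor <;> nlinarith
        · constructor <;> nlinarith
      · rcases lt_or_gt_of_ne ha with hneg | hpos
        · constructor <;> nlinarith
        · constructor <;> nlinarith
    have ht0 : 0 < t := lt_trans ht₀pos ht01.1
    have hqP : c < (q : ℝ) * s₀ + t * b := by
      have h1 : (q : ℝ) * s₀ + t * b = t * P := by rw [← hqa, hP]; ring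
      rw [h1]
      nlinarith [ht01.1]
    obtain ⟨r, hr1, hr2⟩ := exists_rat_btwn (show c - (q : ℝ) * s₀ < t * b by linarith)
    refine ⟨q, r, fun s => ?_, by linarith⟩
    calc ENNReal.ofReal ((q : ℝ) * s + (r : ℝ))
        ≤ ENNReal.ofReal (t * (a * s + b)) := by
          apply ENNReal.ofReal_le_ofReal
          have : (q : ℝ) * s = t * a * s := by rw [hqa]
          rw [this]; nlinarith
      _ = ENNReal.ofReal t * ENNReal.ofReal (a * s + b) := ENNReal.ofReal_mul ht0.le
      _ ≤ 1 * j s := mul_le_mul' (ENNReal.ofReal_le_one.2 ht01.2.le) (hmin s)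
      _ = j s := one_mul _

private lemma ofReal_int_le {X : Type*} [MeasurableSpace X] {μ : Measure X} {f : X → ℝ}
    (hf : Integrable f μ) :
    ENNReal.ofReal (∫ x, f x ∂μ) ≤ ∫⁻ x, ENNReal.ofReal (f x) ∂μ := by
  calc ENNReal.ofReal (∫ x, f x ∂μ) ≤ ENNReal.ofReal (∫ x, max (f x) 0 ∂μ) := by
        apply ENNReal.ofReal_le_ofReal
        exact integral_mono hf hf.pos_part fun x => le_max_left _ _
    _ = ∫⁻ x, ENNReal.ofReal (max (f x) 0) ∂μ :=
        ofReal_integral_eq_lintegral_ofReal hf.pos_part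
          (Eventually.of_forall fun x => le_max_right _ _)
    _ = ∫⁻ x, ENNReal.ofReal (f x) ∂μ := by
        apply lintegral_congr fun x => ?_
        rcases le_total (f x) 0 with h | h
        · rw [max_eq_right h, ENNReal.ofReal_eq_zero.2 h, ENNReal.ofReal_zero]
        · rw [max_eq_left h]

/-- Weak lower semicontinuity of the convex integral functional `Ψ(u) = ∫ j(u) dμ` for a
convex lower semicontinuous `j : ℝ → [0,∞]` with `j(0) = 0`: if `u_n → u` weakly in
`L¹(X,μ)` then `∫ j(u) dμ ≤ liminf_n ∫ j(u_n) dμ`. -/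
theorem convex_integral_weakly_lsc {X : Type*} [MeasurableSpace X]
    (μ : Measure X) [IsFiniteMeasure μ]
    (j : ℝ → ℝ≥0∞)
    (hjc : ∀ a b t : ℝ, 0 ≤ t → t ≤ 1 →
      j (t * a + (1 - t) * b) ≤ ENNReal.ofReal t * j a + ENNReal.ofReal (1 - t) * j b)
    (hjlsc : LowerSemicontinuous j) (hj0 : j 0 = 0)
    (u : X → ℝ) (un : ℕ → X → ℝ)
    (hun : ∀ n, Integrable (un n) μ) (hu : Integrable u μ)
    (hweak : ∀ v : X → ℝ, Measurable v → (∃ M : ℝ, ∀ x, |v x| ≤ M) →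
      Tendsto (fun n => ∫ x, un n x * v x ∂μ) atTop (nhds (∫ x, u x * v x ∂μ))) :
    ∫⁻ x, j (u x) ∂μ ≤ liminf (fun n => ∫⁻ x, j (un n x) ∂μ) atTop := by
  classical
  obtain ⟨u', hu'm, huu'⟩ : ∃ u' : X → ℝ, Measurable u' ∧ u =ᵐ[μ] u' :=
    ⟨hu.1.aemeasurable.mk u, hu.1.aemeasurable.measurable_mk, hu.1.aemeasurable.ae_eq_mk⟩
  have hu' : Integrable u' μ := hu.congr huu'
  obtain ⟨e, he⟩ := exists_surjective_nat (ℚ × ℚ)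
  set valid : ℚ × ℚ → Prop :=
    fun p => ∀ s : ℝ, ENNReal.ofReal ((p.1 : ℝ) * s + (p.2 : ℝ)) ≤ j s with hvalid
  set A : ℕ → ℝ := fun n => if valid (e n) then ((e n).1 : ℝ) else 0 with hA
  set B : ℕ → ℝ := fun n => if valid (e n) then ((e n).2 : ℝ) else 0 with hB
  have hmin : ∀ k s, ENNReal.ofReal (A k * s + B k) ≤ j s := by
    intro k s
    by_cases h : valid (e k)
    · have hAk : A k = ((e k).1 : ℝ) := if_pos h
      have hBk : B k = ((e k).2 : ℝ) := if_pos h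
      rw [hAk, hBk]; exact h s
    · have hAk : A k = 0 := if_neg h
      have hBk : B k = 0 := if_neg h
      rw [hAk, hBk]; simp
  have hrep : ∀ s : ℝ, j s ≤ ⨆ k, ENNReal.ofReal (A k * s + B k) := by
    intro s
    refine le_of_forall_lt fun cc hcc => ?_
    obtain ⟨r, hr0, hr1, hr2⟩ := ENNReal.lt_iff_exists_real_btwn.1 hcc
    obtain ⟨a, b, hab1, hab2⟩ := jsep hjc hjlsc hj0 hr0 hr2
    obtain ⟨q, rr, hq1, hq2⟩ := jrat' hab1 hr0 hab2
    obtain ⟨k, hk⟩ := he (q, rr)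
    have hvk : valid (q, rr) := hq1
    have hAk : A k = (q : ℝ) := by simp only [hA, hk, if_pos hvk]
    have hBk : B k = (rr : ℝ) := by simp only [hB, hk, if_pos hvk]
    calc cc < ENNReal.ofReal r := hr1
      _ ≤ ENNReal.ofReal (A k * s + B k) := by
          rw [hAk, hBk]; exact ENNReal.ofReal_le_ofReal hq2.le
      _ ≤ ⨆ k, ENNReal.ofReal (A k * s + B k) :=
          le_iSup (fun k => ENNReal.ofReal (A k * s + B k)) k
  -- the recursive sequence of partial maxima of the affine minorants
  set V : ℕ → ℝ → ℝ := fun N => Nat.rec (fun s => max (A 0 * s + B 0) 0)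
    (fun k ih s => max (ih s) (A (k + 1) * s + B (k + 1))) N with hV
  have hV0 : ∀ s, V 0 s = max (A 0 * s + B 0) 0 := fun _ => rfl
  have hVs : ∀ N s, V (N + 1) s = max (V N s) (A (N + 1) * s + B (N + 1)) := fun _ _ => rfl
  have hVnonneg : ∀ N s, 0 ≤ V N s := by
    intro N s
    induction N with
    | zero => rw [hV0]; exact le_max_right _ _
    | succ N ih => rw [hVs]; exact le_trans ih (le_max_left _ _)
  have hVmono : ∀ N s, V N s ≤ V (N + 1) s := fun N s => by
    rw [hVs]; exact le_max_left _ _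
  have hVle : ∀ N s, ENNReal.ofReal (V N s) ≤ j s := by
    intro N s
    induction N with
    | zero =>
      rw [hV0]
      rcases max_cases (A 0 * s + B 0) 0 with ⟨h1, _⟩ | ⟨h1, _⟩
      · rw [h1]; exact hmin 0 s
      · rw [h1]; simp
    | succ N ih =>
      rw [hVs]
      rcases max_cases (V N s) (A (N + 1) * s + B (N + 1)) with ⟨h1, _⟩ | ⟨h1, _⟩
      · rw [h1]; exact ih
      · rw [h1]; exact hmin (N + 1) s
  have hVindex : ∀ k s, A k * s + B k ≤ V k s := by
    intro k s
    cases k with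
    | zero => rw [hV0]; exact le_max_left _ _
    | succ k => rw [hVs]; exact le_max_right _ _
  have hVcont : ∀ N, Continuous (V N) := by
    intro N
    induction N with
    | zero =>
      show Continuous fun s => max (A 0 * s + B 0) 0
      fun_prop
    | succ N ih =>
      show Continuous fun s => max (V N s) (A (N + 1) * s + B (N + 1))
      exact ih.max (by fun_prop)
  have hju : ∀ s : ℝ, j s = ⨆ N, ENNReal.ofReal (V N s) := by
    intro s
    refine le_antisymm ?_ (iSup_le fun N => hVle N s)
    refine (hrep s).trans (iSup_le fun k => ?_)
    exact le_iSup_of_le k (ENNReal.ofReal_le_ofReal (hVindex k s))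
  -- measurable selection of the active affine function
  have hsel : ∀ N, ∃ v w : X → ℝ, Measurable v ∧ Measurable w ∧
      (∃ M, ∀ x, |v x| ≤ M) ∧ (∃ M, ∀ x, |w x| ≤ M) ∧
      (∀ x, v x * u' x + w x = V N (u' x)) ∧
      (∀ x s, ENNReal.ofReal (v x * s + w x) ≤ j s) := by
    intro N
    induction N with
    | zero =>
      have hS : MeasurableSet {x | A 0 * u' x + B 0 < 0} :=
        measurableSet_lt ((measurable_const.mul hu'm).add measurable_const) measurable_const
      refine ⟨fun x => if A 0 * u' x + B 0 < 0 then 0 else A 0,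
              fun x => if A 0 * u' x + B 0 < 0 then 0 else B 0,
              Measurable.ite hS measurable_const measurable_const,
              Measurable.ite hS measurable_const measurable_const,
              ⟨|A 0|, fun x => ?_⟩, ⟨|B 0|, fun x => ?_⟩, fun x => ?_, fun x s => ?_⟩
      · by_cases h : A 0 * u' x + B 0 < 0 <;> simp [h, abs_nonneg, le_abs_self]
      · by_cases h : A 0 * u' x + B 0 < 0 <;> simp [h, abs_nonneg, le_abs_self]
      · dsimp only
        rw [hV0]
        by_cases h : A 0 * u' x + B 0 < 0
        · rw [if_pos h, if_pos h, max_eq_right h.le]; ring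
        · rw [if_neg h, if_neg h, max_eq_left (not_lt.1 h)]
      · dsimp only
        by_cases h : A 0 * u' x + B 0 < 0
        · rw [if_pos h, if_pos h]; simp
        · rw [if_neg h, if_neg h]; exact hmin 0 s
    | succ N ih =>
      obtain ⟨v, w, hv, hw, ⟨Mv, hMv⟩, ⟨Mw, hMw⟩, heq, hmnr⟩ := ih
      have hS : MeasurableSet {x | v x * u' x + w x < A (N + 1) * u' x + B (N + 1)} :=
        measurableSet_lt ((hv.mul hu'm).add hw)
          ((measurable_const.mul hu'm).add measurable_const)
      refine ⟨fun x => if v x * u' x + w x < A (N + 1) * u' x + B (N + 1) then A (N + 1) else v x,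
              fun x => if v x * u' x + w x < A (N + 1) * u' x + B (N + 1) then B (N + 1) else w x,
              Measurable.ite hS measurable_const hv,
              Measurable.ite hS measurable_const hw,
              ⟨max Mv |A (N + 1)|, fun x => ?_⟩, ⟨max Mw |B (N + 1)|, fun x => ?_⟩,
              fun x => ?_, fun x s => ?_⟩
      · dsimp only
        by_cases h : v x * u' x + w x < A (N + 1) * u' x + B (N + 1)
        · rw [if_pos h]; exact le_max_of_le_right le_rfl
        · rw [if_neg h]; exact le_max_of_le_left (hMv x)
      · dsimp only
        by_cases h : v x * u' x + w x < A (N + 1) * u' x + B (N + 1)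
        · rw [if_pos h]; exact le_max_of_le_right le_rfl
        · rw [if_neg h]; exact le_max_of_le_left (hMw x)
      · dsimp only
        rw [hVs]
        by_cases h : v x * u' x + w x < A (N + 1) * u' x + B (N + 1)
        · rw [if_pos h, if_pos h, max_eq_right]
          rw [← heq x]; exact h.le
        · rw [if_neg h, if_neg h, max_eq_left, heq x]
          rw [← heq x]; exact not_lt.1 h
      · dsimp only
        by_cases h : v x * u' x + w x < A (N + 1) * u' x + B (N + 1)
        · rw [if_pos h, if_pos h]; exact hmin (N + 1) s
        · rw [if_neg h, if_neg h]; exact hmnr x s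
  -- the key estimate for each N
  have key : ∀ N, (∫⁻ x, ENNReal.ofReal (V N (u' x)) ∂μ) ≤
      liminf (fun n => ∫⁻ x, j (un n x) ∂μ) atTop := by
    intro N
    obtain ⟨v, w, hv, hw, ⟨Mv, hMv⟩, ⟨Mw, hMw⟩, heq, hmnr⟩ := hsel N
    have hwInt : Integrable w μ := by
      refine (integrable_const Mw).mono' hw.aestronglyMeasurable
        (Eventually.of_forall fun x => ?_)
      rw [Real.norm_eq_abs]; exact hMw x
    have hvnorm : ∀ᵐ x ∂μ, ‖v x‖ ≤ Mv := Eventually.of_forall fun x => by rw [Real.norm_eq_abs]; exact hMv x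
    have hint : ∀ g : X → ℝ, Integrable g μ → Integrable (fun x => v x * g x + w x) μ :=
      fun g hg => (hg.bdd_mul hv.aestronglyMeasurable hvnorm).add hwInt
    have harr : ∀ g : X → ℝ, Integrable g μ →
        ∫ x, (v x * g x + w x) ∂μ = (∫ x, g x * v x ∂μ) + ∫ x, w x ∂μ := by
      intro g hg
      rw [integral_add (hg.bdd_mul hv.aestronglyMeasurable hvnorm) hwInt]
      congr 1
      exact integral_congr_ae (Eventually.of_forall fun x => mul_comm _ _)
    have h1 : ∀ n, ENNReal.ofReal (∫ x, (v x * un n x + w x) ∂μ) ≤ ∫⁻ x, j (un n x) ∂μ := by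
      intro n
      refine (ofReal_int_le (hint _ (hun n))).trans (lintegral_mono fun x => hmnr x (un n x))
    have h2 : Tendsto (fun n => ∫ x, (v x * un n x + w x) ∂μ) atTop
        (𝓝 (∫ x, (v x * u' x + w x) ∂μ)) := by
      have hconv := (hweak v hv ⟨Mv, hMv⟩).add (tendsto_const_nhds (x := ∫ x, w x ∂μ))
      have huu'int : ∫ x, u x * v x ∂μ = ∫ x, u' x * v x ∂μ :=
        integral_congr_ae (huu'.mono fun x hx => by
          show u x * v x = u' x * v x; rw [hx])
      rw [funext fun n => harr _ (hun n), harr u' hu', ← huu'int]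
      exact hconv
    have h3 : ENNReal.ofReal (∫ x, (v x * u' x + w x) ∂μ) =
        ∫⁻ x, ENNReal.ofReal (V N (u' x)) ∂μ := by
      rw [ofReal_integral_eq_lintegral_ofReal (hint u' hu')
        (Eventually.of_forall fun x => by
          show (0:ℝ) ≤ v x * u' x + w x
          rw [heq x]; exact hVnonneg N (u' x))]
      exact lintegral_congr fun x => by rw [heq x]
    have h4 : Tendsto (fun n => ENNReal.ofReal (∫ x, (v x * un n x + w x) ∂μ)) atTop
        (𝓝 (ENNReal.ofReal (∫ x, (v x * u' x + w x) ∂μ))) :=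
      (ENNReal.continuous_ofReal.tendsto _).comp h2
    calc ∫⁻ x, ENNReal.ofReal (V N (u' x)) ∂μ
        = ENNReal.ofReal (∫ x, (v x * u' x + w x) ∂μ) := h3.symm
      _ = liminf (fun n => ENNReal.ofReal (∫ x, (v x * un n x + w x) ∂μ)) atTop :=
          h4.liminf_eq.symm
      _ ≤ liminf (fun n => ∫⁻ x, j (un n x) ∂μ) atTop :=
          liminf_le_liminf (Eventually.of_forall h1)
  -- conclude by monotone convergence
  have hmono : Monotone (fun N => fun x => ENNReal.ofReal (V N (u' x))) :=
    monotone_nat_of_le_succ fun N x => ENNReal.ofReal_le_ofReal (hVmono N (u' x))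
  calc ∫⁻ x, j (u x) ∂μ
      = ∫⁻ x, j (u' x) ∂μ := lintegral_congr_ae (huu'.mono fun x hx => by
        show j (u x) = j (u' x); rw [hx])
    _ = ∫⁻ x, ⨆ N, ENNReal.ofReal (V N (u' x)) ∂μ := lintegral_congr fun x => hju (u' x)
    _ = ⨆ N, ∫⁻ x, ENNReal.ofReal (V N (u' x)) ∂μ :=
        lintegral_iSup (fun N => ENNReal.measurable_ofReal.comp ((hVcont N).measurable.comp hu'm))
          hmono
    _ ≤ liminf (fun n => ∫⁻ x, j (un n x) ∂μ) atTop := iSup_le key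
end
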